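/- arXiv:1404.7403 — 7 statements merged into one kernel-verified Lean document; each statement's English description precedes it below -/
import Mathlib

section
/- Under the stated two-dimensional setup, suppose the selection rule S_2 always selects at least one index (Pr(S_2 ≠ ∅) = 1). Then the FCR of the level-(q_1, q_2) FCR-adjusted procedure satisfies FCR = q_1 + (1 − q_1) · FCR_2, where FCR_2 = E[V_2 / max(|S_2|, 1)] with V_2 = #{i ∈ S_2 : θ_{i2} ∉ CI_{i2}(R_min(Y_{•2}^{(i)}) · q_2 / m)} is the FCR of the level-q_2 BY FCR-adjusted confidence intervals for the second coordinates under selection rule S_2. -/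
/-!
STATEMENT 2: In the two-dimensional setup, if the selection rule S₂ almost surely
selects at least one index, the FCR of the level-(q₁, q₂) FCR-adjusted procedure
satisfies FCR = q₁ + (1 − q₁) · FCR₂, where FCR₂ is the FCR of the level-q₂ BY
FCR-adjusted confidence intervals for the second coordinates.
-/

open MeasureTheory ProbabilityTheory Real Set

/-- `R_min(Y_{•2}^{(i)})`: the minimum over `t` of the number of selected indices of
`S₂` applied to the data with `Y_{i2}` replaced by `t`, among those `t` for which `i`
is selected.  (It depends on the data only through the coordinates other than `i`.) -/
noncomputable def Rmin (m : ℕ) (S2 : (Fin m → ℝ) → Finset (Fin m)) (i : Fin m)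
    (v : Fin m → ℝ) : ℕ :=
  sInf {r : ℕ | ∃ t : ℝ, i ∈ S2 (Function.update v i t) ∧
    (S2 (Function.update v i t)).card = r}

open Classical in
/-- The false coverage proportion of the level-(q₁, q₂) FCR-adjusted procedure:
the proportion of selected indices `i` whose rectangular confidence set
`C̃I_i = CI_{i1}(q₁) × CI_{i2}(R_min · q₂ / m)` fails to cover `(θ_{i1}, θ_{i2})`. -/
noncomputable def fcp2d (m : ℕ) (q1 q2 : ℝ) (θ1 θ2 : Fin m → ℝ)
    (CI1 CI2 : Fin m → ℝ → ℝ → Set ℝ) (S2 : (Fin m → ℝ) → Finset (Fin m))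
    (v1 v2 : Fin m → ℝ) : ℝ :=
  (((S2 v2).filter fun i =>
      ¬ (θ1 i ∈ CI1 i (v1 i) q1 ∧
        θ2 i ∈ CI2 i (v2 i) (Rmin m S2 i v2 * q2 / m))).card : ℝ) /
    max ((S2 v2).card : ℝ) 1

open Classical in
/-- The false coverage proportion of the level-q₂ BY FCR-adjusted confidence intervals
for the second coordinates: the proportion of selected indices `i` with
`θ_{i2} ∉ CI_{i2}(R_min · q₂ / m)`. -/
noncomputable def fcp2 (m : ℕ) (q2 : ℝ) (θ2 : Fin m → ℝ)
    (CI2 : Fin m → ℝ → ℝ → Set ℝ) (S2 : (Fin m → ℝ) → Finset (Fin m))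
    (v2 : Fin m → ℝ) : ℝ :=
  (((S2 v2).filter fun i =>
      θ2 i ∉ CI2 i (v2 i) (Rmin m S2 i v2 * q2 / m)).card : ℝ) /
    max ((S2 v2).card : ℝ) 1

open Classical

/-- Auxiliary: integrability of a bounded measurable real function w.r.t. a
probability measure. -/
lemma aux_integrable_of_bdd {Ω : Type*} [MeasurableSpace Ω] (P : Measure Ω)
    [IsProbabilityMeasure P] {f : Ω → ℝ} (hf : Measurable f)
    (hb : ∀ ω, |f ω| ≤ 1) : Integrable f P :=
  Integrable.mono' (integrable_const 1) hf.aestronglyMeasurable (ae_of_all _ hb)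

theorem two_dim_fcr_identity
    {Ω : Type*} [MeasurableSpace Ω] (P : Measure Ω) [IsProbabilityMeasure P]
    (m : ℕ) (hm : 1 ≤ m) (q1 q2 : ℝ)
    (hq1 : q1 ∈ Set.Icc (0:ℝ) 1) (hq2 : q2 ∈ Set.Icc (0:ℝ) 1)
    (θ1 θ2 : Fin m → ℝ)
    -- the 2m random variables Y_{11}, Y_{12}, ..., Y_{m1}, Y_{m2}
    (Y1 Y2 : Fin m → Ω → ℝ)
    (hY1_meas : ∀ i, Measurable (Y1 i)) (hY2_meas : ∀ i, Measurable (Y2 i))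
    -- mutual independence of all 2m variables
    (hindep : iIndepFun
      (Sum.elim Y1 Y2) P)
    -- confidence sets: CI_{i1}(α) depends only on Y_{i1}, with exact coverage 1 − α;
    -- CI_{i2}(α) depends only on Y_{i2}, with coverage at least 1 − α
    (CI1 CI2 : Fin m → ℝ → ℝ → Set ℝ)
    (hCI1_meas : ∀ i, ∀ α t : ℝ, MeasurableSet {x : ℝ | t ∈ CI1 i x α})
    (hCI2_meas : ∀ i, ∀ α t : ℝ, MeasurableSet {x : ℝ | t ∈ CI2 i x α})
    (hCI1_cov : ∀ i, ∀ α ∈ Set.Icc (0:ℝ) 1,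
      P {ω | θ1 i ∈ CI1 i (Y1 i ω) α} = ENNReal.ofReal (1 - α))
    (hCI2_cov : ∀ i, ∀ α ∈ Set.Icc (0:ℝ) 1,
      ENNReal.ofReal (1 - α) ≤ P {ω | θ2 i ∈ CI2 i (Y2 i ω) α})
    -- measurable selection rule based only on Y_{•2}
    (S2 : (Fin m → ℝ) → Finset (Fin m))
    (hS2_meas : ∀ i, MeasurableSet {v : Fin m → ℝ | i ∈ S2 v})
    (hRmin_meas : ∀ i, Measurable fun v : Fin m → ℝ => Rmin m S2 i v)
    -- S₂ always selects at least one index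
    (hS2_ne : P {ω | S2 (fun j => Y2 j ω) ≠ ∅} = 1) :
    -- FCR of the two-dimensional procedure = q₁ + (1 − q₁) · FCR₂
    ∫ ω, fcp2d m q1 q2 θ1 θ2 CI1 CI2 S2 (fun j => Y1 j ω) (fun j => Y2 j ω) ∂P
      = q1 + (1 - q1) * ∫ ω, fcp2 m q2 θ2 CI2 S2 (fun j => Y2 j ω) ∂P := by
  obtain ⟨hq10, hq11⟩ := hq1
  -- basic functions
  set D : (Fin m → ℝ) → ℝ := fun v => max ((S2 v).card : ℝ) 1 with hD
  have hD1 : ∀ v, 1 ≤ D v := fun v => le_max_right _ _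
  have hDpos : ∀ v, 0 < D v := fun v => lt_of_lt_of_le one_pos (hD1 v)
  set φ : Fin m → ℝ → ℝ := fun i x => if θ1 i ∈ CI1 i x q1 then 1 else 0 with hφ
  set h : Fin m → (Fin m → ℝ) → ℝ :=
    fun i v => (if i ∈ S2 v then (1:ℝ) else 0) / D v with hh
  set g : Fin m → (Fin m → ℝ) → ℝ :=
    fun i v => (if i ∈ S2 v ∧ θ2 i ∉ CI2 i (v i) (Rmin m S2 i v * q2 / m)
      then (1:ℝ) else 0) / D v with hg
  -- measurability facts
  have hmeasD : Measurable D := by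
    have : Measurable fun v => ((S2 v).card : ℝ) := by
      have hcard : ∀ v : Fin m → ℝ,
          ((S2 v).card : ℝ) = ∑ i : Fin m, if i ∈ S2 v then (1:ℝ) else 0 := by
        intro v
        rw [Finset.sum_boole]
        congr 1
        simp
      simp only [hcard]
      exact Finset.measurable_sum _ fun i _ =>
        Measurable.ite (hS2_meas i) measurable_const measurable_const
    exact this.max measurable_const
  have hmeash : ∀ i, Measurable (h i) := fun i =>
    (Measurable.ite (hS2_meas i) measurable_const measurable_const).div hmeasD
  have hmeasB : ∀ i, MeasurableSet
      {v : Fin m → ℝ | θ2 i ∈ CI2 i (v i) (Rmin m S2 i v * q2 / m)} := by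
    intro i
    have : {v : Fin m → ℝ | θ2 i ∈ CI2 i (v i) (Rmin m S2 i v * q2 / m)}
        = ⋃ r : ℕ, ({v | Rmin m S2 i v = r} ∩
            (fun v : Fin m → ℝ => v i) ⁻¹' {x | θ2 i ∈ CI2 i x (r * q2 / m)}) := by
      ext v
      simp only [Set.mem_iUnion, Set.mem_inter_iff, Set.mem_setOf_eq, Set.mem_preimage]
      constructor
      · intro hv; exact ⟨Rmin m S2 i v, rfl, hv⟩
      · rintro ⟨r, hr, hv⟩; rw [hr]; exact hv
    rw [this]
    exact MeasurableSet.iUnion fun r =>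
      ((hRmin_meas i (measurableSet_singleton r)) :
          MeasurableSet {v | Rmin m S2 i v = r}).inter
        ((measurable_pi_apply i) (hCI2_meas i (r * q2 / m) (θ2 i)))
  have hmeasg : ∀ i, Measurable (g i) := by
    intro i
    refine Measurable.div ?_ hmeasD
    refine Measurable.ite ?_ measurable_const measurable_const
    exact (hS2_meas i).inter (hmeasB i).compl
  have hmeasφ : ∀ i, Measurable (φ i) := fun i =>
    Measurable.ite (hCI1_meas i q1 (θ1 i)) measurable_const measurable_const
  have hY2vec : Measurable fun ω => (fun j => Y2 j ω) :=
    measurable_pi_lambda _ hY2_meas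
  -- bounds
  have hφ_bdd : ∀ i x, |φ i x| ≤ 1 := by
    intro i x; simp only [hφ]; split <;> simp
  have hφ_mem : ∀ i x, φ i x = 0 ∨ φ i x = 1 := by
    intro i x; simp only [hφ]; split <;> simp
  have hdiv_bdd : ∀ (b : ℝ) (v : Fin m → ℝ), b = 0 ∨ b = 1 → |b / D v| ≤ 1 := by
    intro b v hb
    rcases hb with hb | hb <;> subst hb
    · simp
    · rw [abs_div, abs_one, abs_of_pos (hDpos v)]
      rw [div_le_one (hDpos v)]
      exact hD1 v
  have hh_bdd : ∀ i v, |h i v| ≤ 1 := by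
    intro i v; apply hdiv_bdd; split <;> simp
  have hg_bdd : ∀ i v, |g i v| ≤ 1 := by
    intro i v; apply hdiv_bdd; split <;> simp
  -- integrability of the random variables
  have hintφ : ∀ i, Integrable (fun ω => φ i (Y1 i ω)) P := fun i =>
    aux_integrable_of_bdd P ((hmeasφ i).comp (hY1_meas i)) (fun ω => hφ_bdd i _)
  have hinth : ∀ i, Integrable (fun ω => h i (fun j => Y2 j ω)) P := fun i =>
    aux_integrable_of_bdd P ((hmeash i).comp hY2vec) (fun ω => hh_bdd i _)
  have hintg : ∀ i, Integrable (fun ω => g i (fun j => Y2 j ω)) P := fun i =>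
    aux_integrable_of_bdd P ((hmeasg i).comp hY2vec) (fun ω => hg_bdd i _)
  -- independence of Y1 i and the whole vector Y2
  have hfmeas : ∀ j : Fin m ⊕ Fin m, Measurable (Sum.elim Y1 Y2 j) := by
    rintro (j | j)
    · exact hY1_meas j
    · exact hY2_meas j
  have hindep_vec : ∀ i : Fin m,
      IndepFun (Y1 i) (fun ω => (fun j => Y2 j ω)) P := by
    intro i
    have hdisj : Disjoint ({Sum.inl i} : Finset (Fin m ⊕ Fin m))
        (Finset.univ.image Sum.inr) := by
      simp [Finset.disjoint_left]
    set Sl : Finset (Fin m ⊕ Fin m) := {Sum.inl i} with hSl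
    set T : Finset (Fin m ⊕ Fin m) := Finset.univ.image Sum.inr with hT
    have H := hindep.indepFun_finset Sl T hdisj hfmeas
    have hmem1 : (Sum.inl i : Fin m ⊕ Fin m) ∈ Sl := by simp [hSl]
    have hmem2 : ∀ j : Fin m, (Sum.inr j : Fin m ⊕ Fin m) ∈ T := by
      intro j; simp [hT]
    have := H.comp
      (φ := fun u : Sl → ℝ => u ⟨Sum.inl i, hmem1⟩)
      (ψ := fun (u : T → ℝ) (j : Fin m) => u ⟨Sum.inr j, hmem2 j⟩)
      (measurable_pi_apply (⟨Sum.inl i, hmem1⟩ : Sl) :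
        Measurable fun u : Sl → ℝ => u ⟨Sum.inl i, hmem1⟩)
      (measurable_pi_lambda _ fun j => measurable_pi_apply _)
    exact this
  -- independence of composed variables
  have hindep_h : ∀ i, IndepFun (fun ω => φ i (Y1 i ω))
      (fun ω => h i (fun j => Y2 j ω)) P := fun i =>
    (hindep_vec i).comp (hmeasφ i) (hmeash i)
  have hindep_g : ∀ i, IndepFun (fun ω => φ i (Y1 i ω))
      (fun ω => g i (fun j => Y2 j ω)) P := fun i =>
    (hindep_vec i).comp (hmeasφ i) (hmeasg i)
  -- expectation of φ i (Y1 i)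
  have hEφ : ∀ i, ∫ ω, φ i (Y1 i ω) ∂P = 1 - q1 := by
    intro i
    have hseq : (fun ω => φ i (Y1 i ω))
        = Set.indicator {ω | θ1 i ∈ CI1 i (Y1 i ω) q1} (fun _ => (1:ℝ)) := by
      funext ω
      simp only [hφ, Set.indicator_apply, Set.mem_setOf_eq]
    have hsm : MeasurableSet {ω | θ1 i ∈ CI1 i (Y1 i ω) q1} :=
      (hY1_meas i) (hCI1_meas i q1 (θ1 i))
    rw [hseq, integral_indicator_const (1:ℝ) hsm, measureReal_def, hCI1_cov i q1 ⟨hq10, hq11⟩]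
    rw [ENNReal.toReal_ofReal (by linarith)]
    simp
  -- pointwise decomposition of fcp2d
  have hoff : ∀ v2 : Fin m → ℝ, ∀ i : Fin m, i ∉ S2 v2 → h i v2 = 0 ∧ g i v2 = 0 := by
    intro v2 i hi
    constructor
    · simp only [hh, hi, if_false, zero_div]
    · simp only [hg, hi, false_and, if_false, zero_div]
  have hkey : ∀ v1 v2 : Fin m → ℝ,
      fcp2d m q1 q2 θ1 θ2 CI1 CI2 S2 v1 v2
        = ∑ i : Fin m, ((1 - φ i (v1 i)) * h i v2 + φ i (v1 i) * g i v2) := by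
    intro v1 v2
    have hnum : fcp2d m q1 q2 θ1 θ2 CI1 CI2 S2 v1 v2
        = ∑ i ∈ S2 v2, (if ¬ (θ1 i ∈ CI1 i (v1 i) q1 ∧
            θ2 i ∈ CI2 i (v2 i) (Rmin m S2 i v2 * q2 / m)) then (1:ℝ) else 0) / D v2 := by
      unfold fcp2d
      rw [← Finset.sum_div]
      rw [Finset.sum_boole]
    rw [hnum]
    have step1 : ∀ i ∈ S2 v2, (if ¬ (θ1 i ∈ CI1 i (v1 i) q1 ∧
          θ2 i ∈ CI2 i (v2 i) (Rmin m S2 i v2 * q2 / m)) then (1:ℝ) else 0) / D v2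
        = (1 - φ i (v1 i)) * h i v2 + φ i (v1 i) * g i v2 := by
      intro i hi
      by_cases hA : θ1 i ∈ CI1 i (v1 i) q1 <;>
        by_cases hB : θ2 i ∈ CI2 i (v2 i) (Rmin m S2 i v2 * q2 / m) <;>
        simp [hφ, hh, hg, hA, hB, hi]
    rw [Finset.sum_congr rfl step1]
    refine Finset.sum_subset (Finset.subset_univ _) ?_
    intro i _ hi
    rw [(hoff v2 i hi).1, (hoff v2 i hi).2]
    ring
  have hkey2 : ∀ v2 : Fin m → ℝ,
      fcp2 m q2 θ2 CI2 S2 v2 = ∑ i : Fin m, g i v2 := by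
    intro v2
    have hnum : fcp2 m q2 θ2 CI2 S2 v2
        = ∑ i ∈ S2 v2, (if θ2 i ∉ CI2 i (v2 i) (Rmin m S2 i v2 * q2 / m)
            then (1:ℝ) else 0) / D v2 := by
      unfold fcp2
      rw [← Finset.sum_div]
      rw [Finset.sum_boole]
    rw [hnum]
    have step1 : ∀ i ∈ S2 v2, (if θ2 i ∉ CI2 i (v2 i) (Rmin m S2 i v2 * q2 / m)
          then (1:ℝ) else 0) / D v2 = g i v2 := by
      intro i hi
      by_cases hB : θ2 i ∈ CI2 i (v2 i) (Rmin m S2 i v2 * q2 / m) <;>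
        simp [hg, hB, hi]
    rw [Finset.sum_congr rfl step1]
    exact Finset.sum_subset (Finset.subset_univ _) fun i _ hi => (hoff v2 i hi).2
  -- sum of h over i equals 1 when the selection is nonempty
  have hsum_h : ∀ v2 : Fin m → ℝ, S2 v2 ≠ ∅ → ∑ i : Fin m, h i v2 = 1 := by
    intro v2 hne
    have hcardpos : 0 < (S2 v2).card := Finset.card_pos.2 (Finset.nonempty_iff_ne_empty.2 hne)
    have hDcard : D v2 = ((S2 v2).card : ℝ) := by
      simp only [hD]
      exact max_eq_left (by exact_mod_cast hcardpos)
    simp only [hh, ← Finset.sum_div]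
    rw [Finset.sum_boole]
    have : ({i ∈ Finset.univ | i ∈ S2 v2} : Finset (Fin m)) = S2 v2 := by simp
    rw [this, hDcard, div_self (by exact_mod_cast hcardpos.ne')]
  -- the almost-everywhere nonemptiness
  have hae : ∀ᵐ ω ∂P, S2 (fun j => Y2 j ω) ≠ ∅ := by
    have hms : MeasurableSet {ω | S2 (fun j => Y2 j ω) ≠ ∅} := by
      have : {ω | S2 (fun j => Y2 j ω) ≠ ∅}
          = ⋃ i : Fin m, (fun ω => (fun j => Y2 j ω)) ⁻¹' {v | i ∈ S2 v} := by
        ext ω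
        simp only [Set.mem_setOf_eq, Set.mem_iUnion, Set.mem_preimage,
          ← Finset.nonempty_iff_ne_empty, Finset.Nonempty]
      rw [this]
      exact MeasurableSet.iUnion fun i => hY2vec (hS2_meas i)
    rw [ae_iff]
    have := measure_compl hms (measure_ne_top P _)
    simp only [Set.compl_setOf, not_not] at this
    rw [show {a | ¬ S2 (fun j => Y2 j a) ≠ ∅} = {a | S2 (fun j => Y2 j a) = ∅} by
      ext a; simp]
    rw [this, hS2_ne]
    simp
  have hint_sum_h : ∑ i : Fin m, ∫ ω, h i (fun j => Y2 j ω) ∂P = 1 := by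
    rw [← integral_finset_sum _ (fun i _ => hinth i)]
    have hcong : (fun ω => ∑ i : Fin m, h i (fun j => Y2 j ω)) =ᵐ[P] fun _ => (1:ℝ) := by
      filter_upwards [hae] with ω hω using hsum_h _ hω
    rw [integral_congr_ae hcong]
    simp
  -- integrability of the two product terms
  have hint1 : ∀ i, Integrable (fun ω =>
      (1 - φ i (Y1 i ω)) * h i (fun j => Y2 j ω)) P := by
    intro i
    refine aux_integrable_of_bdd P
      ((measurable_const.sub ((hmeasφ i).comp (hY1_meas i))).mul ((hmeash i).comp hY2vec)) ?_
    intro ω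
    rw [abs_mul]
    have h1 : |1 - φ i (Y1 i ω)| ≤ 1 := by
      rcases hφ_mem i (Y1 i ω) with hx | hx <;> rw [hx] <;> norm_num
    exact mul_le_one₀ h1 (abs_nonneg _) (hh_bdd i _)
  have hint2 : ∀ i, Integrable (fun ω =>
      φ i (Y1 i ω) * g i (fun j => Y2 j ω)) P := by
    intro i
    refine aux_integrable_of_bdd P
      (((hmeasφ i).comp (hY1_meas i)).mul ((hmeasg i).comp hY2vec)) ?_
    intro ω
    rw [abs_mul]
    exact mul_le_one₀ (hφ_bdd i _) (abs_nonneg _) (hg_bdd i _)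
  -- factorization of each term
  have hE1 : ∀ i, ∫ ω, (1 - φ i (Y1 i ω)) * h i (fun j => Y2 j ω) ∂P
      = q1 * ∫ ω, h i (fun j => Y2 j ω) ∂P := by
    intro i
    have hind : IndepFun (fun ω => 1 - φ i (Y1 i ω))
        (fun ω => h i (fun j => Y2 j ω)) P :=
      (hindep_vec i).comp ((measurable_const.sub (hmeasφ i)) :
        Measurable fun x : ℝ => 1 - φ i x) (hmeash i)
    have hintsub : Integrable (fun ω => 1 - φ i (Y1 i ω)) P :=
      (integrable_const 1).sub (hintφ i)
    have hmul : ∫ ω, (1 - φ i (Y1 i ω)) * h i (fun j => Y2 j ω) ∂P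
        = (∫ ω, (1 - φ i (Y1 i ω)) ∂P) * ∫ ω, h i (fun j => Y2 j ω) ∂P :=
      hind.integral_fun_mul_eq_mul_integral hintsub.aestronglyMeasurable (hinth i).aestronglyMeasurable
    rw [hmul]
    congr 1
    rw [integral_sub (integrable_const 1) (hintφ i), hEφ i, integral_const]
    simp
  have hE2 : ∀ i, ∫ ω, φ i (Y1 i ω) * g i (fun j => Y2 j ω) ∂P
      = (1 - q1) * ∫ ω, g i (fun j => Y2 j ω) ∂P := by
    intro i
    have hmul : ∫ ω, φ i (Y1 i ω) * g i (fun j => Y2 j ω) ∂P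
        = (∫ ω, φ i (Y1 i ω) ∂P) * ∫ ω, g i (fun j => Y2 j ω) ∂P :=
      (hindep_g i).integral_fun_mul_eq_mul_integral (hintφ i).aestronglyMeasurable (hintg i).aestronglyMeasurable
    rw [hmul, hEφ i]
  -- put everything together
  have hfcp2 : ∫ ω, fcp2 m q2 θ2 CI2 S2 (fun j => Y2 j ω) ∂P
      = ∑ i : Fin m, ∫ ω, g i (fun j => Y2 j ω) ∂P := by
    simp only [hkey2]
    exact integral_finset_sum _ fun i _ => hintg i
  calc ∫ ω, fcp2d m q1 q2 θ1 θ2 CI1 CI2 S2 (fun j => Y1 j ω) (fun j => Y2 j ω) ∂P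
      = ∫ ω, ∑ i : Fin m, ((1 - φ i (Y1 i ω)) * h i (fun j => Y2 j ω)
          + φ i (Y1 i ω) * g i (fun j => Y2 j ω)) ∂P := by
        apply integral_congr_ae
        exact ae_of_all _ fun ω => hkey _ _
    _ = ∑ i : Fin m, ∫ ω, ((1 - φ i (Y1 i ω)) * h i (fun j => Y2 j ω)
          + φ i (Y1 i ω) * g i (fun j => Y2 j ω)) ∂P :=
        integral_finset_sum _ fun i _ => (hint1 i).add (hint2 i)
    _ = ∑ i : Fin m, (q1 * ∫ ω, h i (fun j => Y2 j ω) ∂P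
          + (1 - q1) * ∫ ω, g i (fun j => Y2 j ω) ∂P) := by
        refine Finset.sum_congr rfl fun i _ => ?_
        rw [integral_add (hint1 i) (hint2 i), hE1 i, hE2 i]
    _ = q1 * (∑ i : Fin m, ∫ ω, h i (fun j => Y2 j ω) ∂P)
          + (1 - q1) * ∑ i : Fin m, ∫ ω, g i (fun j => Y2 j ω) ∂P := by
        rw [Finset.sum_add_distrib, Finset.mul_sum, Finset.mul_sum]
    _ = q1 + (1 - q1) * ∫ ω, fcp2 m q2 θ2 CI2 S2 (fun j => Y2 j ω) ∂P := by
        rw [hint_sum_h, hfcp2, mul_one]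
end

section
/- With the notation of the selection-rule setup: 1 ∈ S*(y) if and only if τ(ĩ*(y)) ≤ |y_1|. -/
/-!
STATEMENT 3: With the notation of the selection-rule setup, coordinate 1 is selected
if and only if τ(ĩ*(y)) ≤ |y_1|.
-/

open Classical ENNReal

/-- The `r`-th largest entry of a vector `v ∈ [0,∞]^m` (1-indexed; junk value `0`
if `r` is out of range). -/
noncomputable def ordDesc (m : ℕ) (v : Fin m → ℝ≥0∞) (r : ℕ) : ℝ≥0∞ :=
  ((List.ofFn v).mergeSort (fun a b => decide (b ≤ a))).getD (r - 1) 0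

/-- The vector `a(y) = (|y_1|, ..., |y_m|)`, viewed in `[0,∞]`. -/
noncomputable def absVec (m : ℕ) (y : Fin m → ℝ) : Fin m → ℝ≥0∞ :=
  fun i => ENNReal.ofReal |y i|

/-- `i*(y) = max{i ∈ {1,...,m} : τ(i) ≤ a(y)_(i)}`, with value `0` if no such `i`
exists. -/
noncomputable def istar (m : ℕ) (τ : ℕ → ℝ) (y : Fin m → ℝ) : ℕ :=
  ((Finset.Icc 1 m).filter fun r =>
    ENNReal.ofReal (τ r) ≤ ordDesc m (absVec m y) r).sup id

/-- `w(y)`: the vector `a(y)` with its first entry replaced by `+∞`. -/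
noncomputable def wVec (m : ℕ) [NeZero m] (y : Fin m → ℝ) : Fin m → ℝ≥0∞ :=
  Function.update (absVec m y) 0 ⊤

/-- `ĩ*(y) = max{i ∈ {1,...,m} : τ(i) ≤ w(y)_(i)}`. -/
noncomputable def istarTilde (m : ℕ) [NeZero m] (τ : ℕ → ℝ) (y : Fin m → ℝ) : ℕ :=
  ((Finset.Icc 1 m).filter fun r =>
    ENNReal.ofReal (τ r) ≤ ordDesc m (wVec m y) r).sup id

/-- The selected set `S*(y) = {i : |y_i| ≥ a(y)_(i*(y))}` if `i*(y) ≥ 1`,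
and `S*(y) = ∅` otherwise. -/
noncomputable def SstarSel (m : ℕ) (τ : ℕ → ℝ) (y : Fin m → ℝ) : Finset (Fin m) :=
  if 1 ≤ istar m τ y then
    Finset.univ.filter fun i =>
      ordDesc m (absVec m y) (istar m τ y) ≤ ENNReal.ofReal |y i|
  else ∅

/- ## Auxiliary lemmas -/

private lemma countP_eq_card_aux (m : ℕ) (v : Fin m → ℝ≥0∞) (x : ℝ≥0∞) :
    (List.ofFn v).countP (fun z => decide (x ≤ z))
      = (Finset.univ.filter fun i => x ≤ v i).card := by
  classical
  rw [List.ofFn_eq_map, List.countP_map]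
  rw [Finset.card_def, Finset.filter_val, ← Multiset.countP_eq_card_filter, Fin.univ_def,
    Multiset.coe_countP]
  rfl

private lemma sortAux (m : ℕ) (v : Fin m → ℝ≥0∞) :
    ∃ l : List ℝ≥0∞, l = (List.ofFn v).mergeSort (fun a b => decide (b ≤ a)) ∧
      l.length = m ∧
      (∀ i j, (hi : i < l.length) → (hj : j < l.length) → i ≤ j → l[j] ≤ l[i]) ∧
      (∀ x : ℝ≥0∞, l.countP (fun z => decide (x ≤ z))
        = (Finset.univ.filter fun i => x ≤ v i).card) := by
  refine ⟨_, rfl, ?_, ?_, ?_⟩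
  · rw [(List.mergeSort_perm _ _).length_eq, List.length_ofFn]
  · have hp := List.pairwise_mergeSort (le := fun a b : ℝ≥0∞ => decide (b ≤ a))
      (by intro a b c hab hbc; simp only [decide_eq_true_eq] at *; exact le_trans hbc hab)
      (by intro a b; simpa using le_total b a) (List.ofFn v)
    rw [List.pairwise_iff_getElem] at hp
    intro i j hi hj hij
    rcases lt_or_eq_of_le hij with h | h
    · simpa using hp i j hi hj h
    · subst h; exact le_rfl
  · intro x
    rw [(List.mergeSort_perm _ _).countP_eq]
    exact countP_eq_card_aux m v x

private lemma cardA (m r : ℕ) (v : Fin m → ℝ≥0∞) (h1 : 1 ≤ r) (h2 : r ≤ m) :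
    r ≤ (Finset.univ.filter fun i => ordDesc m v r ≤ v i).card := by
  obtain ⟨l, hl, hlen, hsort, hcount⟩ := sortAux m v
  have hrlen : r - 1 < l.length := by omega
  have hord : ordDesc m v r = l[r - 1] := by
    rw [ordDesc, ← hl]; exact List.getD_eq_getElem l 0 hrlen
  rw [← hcount, hord]
  have htake : l.countP (fun z => decide (l[r-1] ≤ z))
      ≥ (l.take r).countP (fun z => decide (l[r-1] ≤ z)) :=
    (List.take_sublist r l).countP_le
  have hall : (l.take r).countP (fun z => decide (l[r-1] ≤ z)) = (l.take r).length := by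
    rw [List.countP_eq_length]
    intro z hz
    rw [List.mem_iff_getElem] at hz
    obtain ⟨i, hi, hzi⟩ := hz
    have hi' : i < l.length := lt_of_lt_of_le hi (by simp [List.length_take])
    have : i ≤ r - 1 := by
      have hi2 : i < r := lt_of_lt_of_le hi (by rw [List.length_take]; omega)
      omega
    have := hsort i (r-1) hi' hrlen this
    rw [← hzi, List.getElem_take]
    simpa using this
  have hlt : (l.take r).length = r := by rw [List.length_take]; omega
  omega

private lemma cardB (m r : ℕ) (v : Fin m → ℝ≥0∞) (x : ℝ≥0∞) (h1 : 1 ≤ r) (h2 : r ≤ m)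
    (h : r ≤ (Finset.univ.filter fun i => x ≤ v i).card) : x ≤ ordDesc m v r := by
  obtain ⟨l, hl, hlen, hsort, hcount⟩ := sortAux m v
  have hrlen : r - 1 < l.length := by omega
  have hord : ordDesc m v r = l[r - 1] := by
    rw [ordDesc, ← hl]; exact List.getD_eq_getElem l 0 hrlen
  rw [hord]
  by_contra hcon
  push_neg at hcon
  have hkey : l.countP (fun z => decide (x ≤ z)) ≤ r - 1 := by
    have hdrop : (l.drop (r-1)).countP (fun z => decide (x ≤ z)) = 0 := by
      rw [List.countP_eq_zero]
      intro z hz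
      rw [List.mem_iff_getElem] at hz
      obtain ⟨i, hi, hzi⟩ := hz
      have hi' : r - 1 + i < l.length := by
        have := (List.length_drop (i := r-1) (l := l)) ▸ hi; omega
      have hle : l[r-1+i] ≤ l[r-1] := hsort (r-1) (r-1+i) hrlen hi' (by omega)
      have : z ≤ l[r-1] := by rw [← hzi, List.getElem_drop]; exact hle
      simp only [decide_eq_true_eq]
      exact fun hx => absurd (le_trans hx this) (not_le.mpr hcon)
    have htakelen : (l.take (r-1)).countP (fun z => decide (x ≤ z)) ≤ r - 1 := by
      calc (l.take (r-1)).countP (fun z => decide (x ≤ z)) ≤ (l.take (r-1)).length :=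
            List.countP_le_length
        _ ≤ r - 1 := by simp [List.length_take]
    have happ := List.countP_append (p := fun z => decide (x ≤ z)) (l₁ := l.take (r-1)) (l₂ := l.drop (r-1))
    rw [List.take_append_drop] at happ
    omega
  rw [hcount] at hkey
  omega

private lemma ordDesc_mono_vec (m r : ℕ) (v u : Fin m → ℝ≥0∞) (h1 : 1 ≤ r) (h2 : r ≤ m)
    (hvu : ∀ i, v i ≤ u i) : ordDesc m v r ≤ ordDesc m u r := by
  apply cardB m r u _ h1 h2
  refine le_trans (cardA m r v h1 h2) (Finset.card_le_card ?_)
  intro i hi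
  simp only [Finset.mem_filter, Finset.mem_univ, true_and] at *
  exact le_trans hi (hvu i)

private lemma sup_id_mem (s : Finset ℕ) (h : s.Nonempty) : s.sup id ∈ s := by
  rw [← Finset.sup'_eq_sup h id, ← Finset.max'_eq_sup']
  exact Finset.max'_mem s h

theorem first_coordinate_selected_iff (m : ℕ) [NeZero m] (hm : 1 ≤ m)
    (τ : ℕ → ℝ) (hτ_nonneg : ∀ i ∈ Finset.Icc 1 m, 0 ≤ τ i)
    (hτ_anti : ∀ i ∈ Finset.Icc 1 m, ∀ j ∈ Finset.Icc 1 m, i ≤ j → τ j ≤ τ i)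
    (y : Fin m → ℝ) :
    (0 : Fin m) ∈ SstarSel m τ y ↔ τ (istarTilde m τ y) ≤ |y 0| := by
  classical
  set a := absVec m y with ha
  set w := wVec m y with hw
  set c := ENNReal.ofReal |y 0| with hc
  have ha0 : a 0 = c := rfl
  have hw0 : w 0 = ⊤ := Function.update_self _ _ _
  have hwi : ∀ i : Fin m, i ≠ 0 → w i = a i := fun i hi => Function.update_of_ne hi _ _
  have haw : ∀ i, a i ≤ w i := by
    intro i
    by_cases hi : i = 0
    · subst hi; rw [hw0]; exact le_top
    · rw [hwi i hi]
  set A : Finset ℕ := (Finset.Icc 1 m).filter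
    (fun r => ENNReal.ofReal (τ r) ≤ ordDesc m a r) with hA
  set W : Finset ℕ := (Finset.Icc 1 m).filter
    (fun r => ENNReal.ofReal (τ r) ≤ ordDesc m w r) with hW
  have histar : istar m τ y = A.sup id := rfl
  have histarT : istarTilde m τ y = W.sup id := rfl
  -- 1 ∈ W
  have hW1 : 1 ∈ W := by
    rw [hW, Finset.mem_filter]
    refine ⟨Finset.mem_Icc.mpr ⟨le_refl 1, hm⟩, ?_⟩
    have : (⊤ : ℝ≥0∞) ≤ ordDesc m w 1 := by
      apply cardB m 1 w ⊤ le_rfl hm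
      exact Finset.card_pos.mpr ⟨0, by simp [Finset.mem_filter, hw0]⟩
    exact le_trans le_top this
  have hWne : W.Nonempty := ⟨1, hW1⟩
  have hkW : W.sup id ∈ W := sup_id_mem W hWne
  obtain ⟨hkIcc', hkτ⟩ := Finset.mem_filter.mp hkW
  have hkIcc := Finset.mem_Icc.mp hkIcc'
  set k := W.sup id with hk
  -- helper: membership of A.sup id in A when A nonempty
  constructor
  · -- forward
    intro h
    rw [SstarSel] at h
    split at h
    case isFalse => exact absurd h (Finset.notMem_empty _)
    case isTrue h1i =>
      rw [Finset.mem_filter] at h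
      have hsel : ordDesc m a (istar m τ y) ≤ c := h.2
      have hAne : A.Nonempty := by
        rw [Finset.nonempty_iff_ne_empty]
        intro hemp
        rw [histar, hemp, Finset.sup_empty] at h1i
        exact absurd h1i (by norm_num)
      have hiA : A.sup id ∈ A := sup_id_mem A hAne
      obtain ⟨hiIcc', hiτ⟩ := Finset.mem_filter.mp hiA
      have hiIcc := Finset.mem_Icc.mp hiIcc'
      -- istar ∈ W
      have hiW : A.sup id ∈ W := Finset.mem_filter.mpr
        ⟨Finset.mem_Icc.mpr hiIcc,
          le_trans hiτ (ordDesc_mono_vec m _ a w hiIcc.1 hiIcc.2 haw)⟩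
      have hik : A.sup id ≤ k := Finset.le_sup (f := id) hiW
      have hττ : τ (W.sup id) ≤ τ (A.sup id) :=
        hτ_anti _ (Finset.mem_Icc.mpr hiIcc) _ (Finset.mem_Icc.mpr hkIcc) hik
      have hic : ENNReal.ofReal (τ (A.sup id)) ≤ c := le_trans hiτ (by rwa [histar] at hsel)
      have : τ (A.sup id) ≤ |y 0| := by
        rw [hc] at hic
        exact (ENNReal.ofReal_le_ofReal_iff (abs_nonneg _)).mp hic
      rw [histarT]
      linarith
  · -- backward
    intro h
    rw [histarT] at h
    have hck : ENNReal.ofReal (τ k) ≤ c := ENNReal.ofReal_le_ofReal h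
    -- k ∈ A
    have hkA : k ∈ A := by
      refine Finset.mem_filter.mpr ⟨hkIcc', ?_⟩
      apply cardB m k a _ hkIcc.1 hkIcc.2
      refine le_trans (cardA m k w hkIcc.1 hkIcc.2) (Finset.card_le_card ?_)
      intro i hi
      simp only [Finset.mem_filter, Finset.mem_univ, true_and] at *
      by_cases hi0 : i = 0
      · subst hi0; rw [ha0]; exact hck
      · rw [← hwi i hi0]; exact le_trans hkτ hi
    have hki : k ≤ A.sup id := Finset.le_sup (f := id) hkA
    have h1i : 1 ≤ istar m τ y := by rw [histar]; omega
    have hAne : A.Nonempty := ⟨k, hkA⟩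
    have hiA : A.sup id ∈ A := sup_id_mem A hAne
    obtain ⟨hiIcc', hiτ⟩ := Finset.mem_filter.mp hiA
    have hiIcc := Finset.mem_Icc.mp hiIcc'
    have him : A.sup id ≤ m := hiIcc.2
    -- key : ordDesc m a (A.sup id) ≤ c
    have hgoal : ordDesc m a (A.sup id) ≤ c := by
      by_contra hlt
      push_neg at hlt
      set d := ordDesc m a (A.sup id) with hd
      by_cases hcase : A.sup id = m
      · -- then the filter is all of univ, so 0 is in it
        have hcard : A.sup id ≤ (Finset.univ.filter fun i => d ≤ a i).card :=
          cardA m (A.sup id) a hiIcc.1 hiIcc.2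
        have hle : (Finset.univ.filter fun i => d ≤ a i).card ≤ m := by
          simpa using Finset.card_le_univ (Finset.univ.filter fun i => d ≤ a i)
        have huniv : (Finset.univ.filter fun i => d ≤ a i) = Finset.univ := by
          apply Finset.eq_univ_of_card
          simp only [Fintype.card_fin]
          omega
        have h0 : (0 : Fin m) ∈ Finset.univ.filter fun i => d ≤ a i := by
          rw [huniv]; exact Finset.mem_univ _
        rw [Finset.mem_filter, ha0] at h0
        exact absurd h0.2 (not_le.mpr hlt)
      · have hltm : A.sup id < m := lt_of_le_of_ne him hcase
        -- count entries of w that are ≥ d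
        set S : Finset (Fin m) := Finset.univ.filter (fun i => d ≤ a i) with hS
        have hScard : A.sup id ≤ S.card := cardA m (A.sup id) a hiIcc.1 hiIcc.2
        have h0S : (0 : Fin m) ∉ S := by
          rw [hS, Finset.mem_filter]
          push_neg
          intro _
          rw [ha0]
          exact hlt
        have hins : insert (0 : Fin m) S ⊆ Finset.univ.filter (fun i => d ≤ w i) := by
          intro i hi
          rw [Finset.mem_insert] at hi
          simp only [Finset.mem_filter, Finset.mem_univ, true_and]
          rcases hi with hi | hi
          · subst hi; rw [hw0]; exact le_top
          · rw [hS, Finset.mem_filter] at hi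
            exact le_trans hi.2 (haw i)
        have hcard' : A.sup id + 1 ≤ (Finset.univ.filter (fun i => d ≤ w i)).card := by
          have := Finset.card_le_card hins
          rw [Finset.card_insert_of_notMem h0S] at this
          omega
        have hdw : d ≤ ordDesc m w (A.sup id + 1) :=
          cardB m (A.sup id + 1) w d (by omega) (by omega) hcard'
        have hmemIcc : A.sup id + 1 ∈ Finset.Icc 1 m := Finset.mem_Icc.mpr ⟨by omega, by omega⟩
        have hτ' : τ (A.sup id + 1) ≤ τ (A.sup id) :=
          hτ_anti _ (Finset.mem_Icc.mpr hiIcc) _ hmemIcc (by omega)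
        have hr'W : A.sup id + 1 ∈ W := Finset.mem_filter.mpr
          ⟨hmemIcc, le_trans (ENNReal.ofReal_le_ofReal hτ') (le_trans hiτ hdw)⟩
        have : A.sup id + 1 ≤ k := Finset.le_sup (f := id) hr'W
        omega
    rw [SstarSel, if_pos h1i, Finset.mem_filter]
    exact ⟨Finset.mem_univ _, by rw [histar]; exact hgoal⟩
end

section
/- With the notation of the selection-rule setup: if τ(ĩ*(y)) ≤ |y_1| then i*(y) = ĩ*(y). Consequently, on the event that coordinate 1 is selected, i*(y) is constant as a function of y_1: for any y_1, y_1' with τ(ĩ*) ≤ min(|y_1|, |y_1'|) (where ĩ* is computed from the common values y_2,...,y_m), the value of i* for (y_1, y_2, ..., y_m) equals the value of i* for (y_1', y_2, ..., y_m), both equal to ĩ*. -/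
/-!
STATEMENT 4: With the notation of the selection-rule setup, if τ(ĩ*(y)) ≤ |y_1| then
i*(y) = ĩ*(y); consequently, on the event that coordinate 1 is selected, i*(y) is
constant as a function of y_1.
-/

open Classical ENNReal

private lemma sortedDesc_getD_iff {l : List ℝ≥0∞}
    (hl : l.Pairwise (fun a b => (decide (b ≤ a)) = true))
    (t : ℝ≥0∞) : ∀ j, j < l.length →
    (t ≤ l.getD j 0 ↔ j + 1 ≤ l.countP (fun x => decide (t ≤ x))) := by
  induction l with
  | nil => intro j hj; simp at hj
  | cons x xs ih =>
    rcases List.pairwise_cons.mp hl with ⟨hx, hxs⟩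
    intro j hj
    cases j with
    | zero =>
      simp only [List.getD_cons_zero, List.countP_cons]
      constructor
      · intro h; simp [h]
      · intro h
        by_cases hx' : t ≤ x
        · exact hx'
        · exfalso
          have hdec : decide (t ≤ x) = false := decide_eq_false hx'
          have hpos : 0 < xs.countP (fun x => decide (t ≤ x)) := by
            rw [hdec] at h; simpa using h
          obtain ⟨a, ha, hta⟩ := List.countP_pos_iff.mp hpos
          have h2 := hx a ha
          simp only [decide_eq_true_eq] at hta h2
          exact hx' (hta.trans h2)
    | succ j =>
      have hj' : j < xs.length := by simpa using hj
      have hih := ih hxs j hj'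
      simp only [List.getD_cons_succ, List.countP_cons]
      constructor
      · intro h
        have h1 : j + 1 ≤ xs.countP (fun x => decide (t ≤ x)) := hih.mp h
        have hmem : xs.getD j 0 ∈ xs := by
          rw [List.getD_eq_getElem xs 0 hj']
          exact List.getElem_mem hj'
        have h2 := hx _ hmem
        simp only [decide_eq_true_eq] at h2
        have hgx : t ≤ x := h.trans h2
        simp [hgx]; omega
      · intro h
        have hle : (if (decide (t ≤ x)) = true then 1 else 0) ≤ 1 := by split <;> omega
        exact hih.mpr (by omega)

private lemma countP_finRange (m : ℕ) (q : Fin m → Prop) [DecidablePred q] :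
    (List.finRange m).countP (fun i => decide (q i)) = (Finset.univ.filter q).card := by
  rw [List.countP_eq_length_filter, Fin.univ_def]
  simp [Finset.filter, Finset.card, Multiset.filter_coe]

private lemma le_ordDesc_iff {m r : ℕ} (hr1 : 1 ≤ r) (hrm : r ≤ m)
    (v : Fin m → ℝ≥0∞) (t : ℝ≥0∞) :
    t ≤ ordDesc m v r ↔ r ≤ (Finset.univ.filter fun i => t ≤ v i).card := by
  unfold ordDesc
  set l := (List.ofFn v).mergeSort (fun a b => decide (b ≤ a)) with hldef
  have hperm : l.Perm (List.ofFn v) := List.mergeSort_perm _ _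
  have hlen : l.length = m := by rw [hperm.length_eq, List.length_ofFn]
  have hsort : l.Pairwise (fun a b => (decide (b ≤ a)) = true) :=
    List.pairwise_mergeSort
      (by intro a b c h1 h2; simp only [decide_eq_true_eq] at *; exact h2.trans h1)
      (by intro a b; simpa using le_total b a) _
  have hcount : l.countP (fun x => decide (t ≤ x)) =
      (Finset.univ.filter fun i => t ≤ v i).card := by
    rw [hperm.countP_eq, List.ofFn_eq_map, List.countP_map]
    exact countP_finRange m (fun i => t ≤ v i)
  have hj : r - 1 < l.length := by omega
  have := sortedDesc_getD_iff hsort t (r - 1) hj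
  rw [hcount] at this
  rw [this]
  omega

private lemma ordDesc_mono {m r : ℕ} (hr1 : 1 ≤ r) (hrm : r ≤ m) {v w : Fin m → ℝ≥0∞}
    (h : ∀ i, v i ≤ w i) : ordDesc m v r ≤ ordDesc m w r := by
  rw [le_ordDesc_iff hr1 hrm]
  have h1 := (le_ordDesc_iff hr1 hrm v (ordDesc m v r)).mp le_rfl
  refine h1.trans (Finset.card_le_card ?_)
  intro i hi
  simp only [Finset.mem_filter, Finset.mem_univ, true_and] at hi ⊢
  exact hi.trans (h i)

private lemma absVec_le_wVec (m : ℕ) [NeZero m] (y : Fin m → ℝ) (i : Fin m) :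
    absVec m y i ≤ wVec m y i := by
  by_cases h : i = 0
  · subst h; simp [wVec, Function.update_self]
  · rw [wVec, Function.update_of_ne h]

private lemma ordDesc_wVec_one (m : ℕ) [NeZero m] (hm : 1 ≤ m) (y : Fin m → ℝ) :
    ordDesc m (wVec m y) 1 = ⊤ := by
  refine le_antisymm le_top ?_
  rw [le_ordDesc_iff le_rfl hm]
  have h0 : (0 : Fin m) ∈ Finset.univ.filter fun i => (⊤ : ℝ≥0∞) ≤ wVec m y i := by
    simp [wVec, Function.update_self]
  exact Finset.card_pos.mpr ⟨0, h0⟩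

private lemma min_le_ordDesc_abs (m : ℕ) [NeZero m] (y : Fin m → ℝ) {k : ℕ}
    (hk1 : 1 ≤ k) (hkm : k ≤ m) :
    min (ordDesc m (wVec m y) k) (ENNReal.ofReal |y 0|) ≤ ordDesc m (absVec m y) k := by
  set t := min (ordDesc m (wVec m y) k) (ENNReal.ofReal |y 0|) with ht
  rw [le_ordDesc_iff hk1 hkm]
  have h1 : k ≤ (Finset.univ.filter fun i => t ≤ wVec m y i).card :=
    (le_ordDesc_iff hk1 hkm _ t).mp (min_le_left _ _)
  refine h1.trans (Finset.card_le_card ?_)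
  intro i hi
  simp only [Finset.mem_filter, Finset.mem_univ, true_and] at hi ⊢
  by_cases h0 : i = 0
  · subst h0
    show t ≤ ENNReal.ofReal |y 0|
    exact min_le_right _ _
  · rwa [wVec, Function.update_of_ne h0] at hi

theorem istar_constant_on_selection (m : ℕ) [NeZero m] (hm : 1 ≤ m)
    (τ : ℕ → ℝ) (hτ_nonneg : ∀ i ∈ Finset.Icc 1 m, 0 ≤ τ i)
    (hτ_anti : ∀ i ∈ Finset.Icc 1 m, ∀ j ∈ Finset.Icc 1 m, i ≤ j → τ j ≤ τ i) :
    -- if τ(ĩ*(y)) ≤ |y_1| then i*(y) = ĩ*(y) ...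
    (∀ y : Fin m → ℝ, τ (istarTilde m τ y) ≤ |y 0| → istar m τ y = istarTilde m τ y) ∧
    -- ... and consequently i* is constant in the first coordinate on the event that
    -- coordinate 1 is selected: if y and y' agree off the first coordinate and
    -- τ(ĩ*) ≤ min(|y_1|, |y'_1|), then i*(y) = i*(y') = ĩ*(y) = ĩ*(y')
    (∀ y y' : Fin m → ℝ, (∀ i : Fin m, i ≠ 0 → y i = y' i) →
      τ (istarTilde m τ y) ≤ min |y 0| |y' 0| →
      istarTilde m τ y = istarTilde m τ y' ∧
      istar m τ y = istarTilde m τ y ∧ istar m τ y' = istarTilde m τ y ∧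
      istar m τ y = istar m τ y') := by
  have hmain : ∀ y : Fin m → ℝ, τ (istarTilde m τ y) ≤ |y 0| →
      istar m τ y = istarTilde m τ y := by
    intro y hy
    have hne : ((Finset.Icc 1 m).filter fun r =>
        ENNReal.ofReal (τ r) ≤ ordDesc m (wVec m y) r).Nonempty := by
      refine ⟨1, ?_⟩
      simp only [Finset.mem_filter, Finset.mem_Icc]
      exact ⟨⟨le_rfl, hm⟩, by rw [ordDesc_wVec_one m hm y]; exact le_top⟩
    obtain ⟨b, hb, hsup⟩ := Finset.exists_mem_eq_sup _ hne id
    have hkb : istarTilde m τ y = b := hsup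
    simp only [Finset.mem_filter, Finset.mem_Icc] at hb
    obtain ⟨⟨hk1, hkm⟩, hkw⟩ := hb
    have hle : istar m τ y ≤ istarTilde m τ y := by
      apply Finset.sup_mono
      intro r hr
      simp only [Finset.mem_filter, Finset.mem_Icc] at hr ⊢
      exact ⟨hr.1, hr.2.trans (ordDesc_mono hr.1.1 hr.1.2 (absVec_le_wVec m y))⟩
    have hmem : istarTilde m τ y ∈ (Finset.Icc 1 m).filter fun r =>
        ENNReal.ofReal (τ r) ≤ ordDesc m (absVec m y) r := by
      rw [hkb]
      simp only [Finset.mem_filter, Finset.mem_Icc]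
      refine ⟨⟨hk1, hkm⟩, ?_⟩
      calc ENNReal.ofReal (τ b)
          ≤ min (ordDesc m (wVec m y) b) (ENNReal.ofReal |y 0|) :=
            le_min hkw (ENNReal.ofReal_le_ofReal (by rw [hkb] at hy; exact hy))
        _ ≤ ordDesc m (absVec m y) b := min_le_ordDesc_abs m y hk1 hkm
    have hge : istarTilde m τ y ≤ istar m τ y := Finset.le_sup (f := id) hmem
    exact le_antisymm hle hge
  refine ⟨hmain, ?_⟩
  intro y y' hagree hmin
  have hw : wVec m y = wVec m y' := by
    funext i
    by_cases h : i = 0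
    · subst h; simp [wVec, Function.update_self]
    · rw [wVec, wVec, Function.update_of_ne h, Function.update_of_ne h]
      simp [absVec, hagree i h]
  have ht : istarTilde m τ y = istarTilde m τ y' := by
    unfold istarTilde; rw [hw]
  have h1 : istar m τ y = istarTilde m τ y :=
    hmain y (hmin.trans (min_le_left _ _))
  have h2 : istar m τ y' = istarTilde m τ y' :=
    hmain y' (by rw [← ht]; exact hmin.trans (min_le_right _ _))
  exact ⟨ht, h1, h2.trans ht.symm, by rw [h1, h2, ht]⟩
end

section
/- Let c > 0 and 0 < α < 1/2. There is no family {C(y)}_{y ∈ ℝ} of subsets of ℝ with the following properties: (i) for every y with |y| > c, either C(y) ⊆ (−∞, 0] or C(y) ⊆ (0, ∞); (ii) the set B⁻ = {y : |y| > c and C(y) ⊆ (−∞, 0]} is Borel, and for every θ ∈ ℝ the set {y : θ ∈ C(y)} is Borel; (iii) for every θ ∈ ℝ, Pr(θ ∈ C(Y) | |Y| > c) ≥ 1 − α, where Y ∼ N(θ, 1). -/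
/-!
STATEMENT 6: For c > 0 and 0 < α < 1/2, there is no family {C(y)} of subsets of ℝ
that is sign-determining on {|y| > c} and has conditional coverage at least 1 − α
given |Y| > c for every θ, where Y ∼ N(θ, 1).
-/

open MeasureTheory ProbabilityTheory Set Filter

/-- Pointwise bound on the Gaussian pdf with mean `t ∈ [0,1]` by a fixed integrable function. -/
lemma gaussPDF_bound {t : ℝ} (ht0 : 0 ≤ t) (ht1 : t ≤ 1) (x : ℝ) :
    gaussianPDFReal t 1 x ≤
      Real.exp (1/8) * (gaussianPDFReal 0 1 x + gaussianPDFReal 1 1 x) := by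
  have key : min ((x - 1)^2) (x^2) - 1/4 ≤ (x - t)^2 := by
    rcases le_or_gt x 0 with hx | hx
    · have : x^2 ≤ (x - t)^2 := by nlinarith
      have := min_le_right ((x - 1)^2) (x^2)
      linarith
    rcases le_or_gt 1 x with hx1 | hx1
    · have : (x - 1)^2 ≤ (x - t)^2 := by nlinarith
      have := min_le_left ((x - 1)^2) (x^2)
      linarith
    · have hmin : min ((x - 1)^2) (x^2) ≤ 1/4 := by
        rcases le_or_gt x (1/2) with h | h
        · exact le_trans (min_le_right _ _) (by nlinarith)
        · exact le_trans (min_le_left _ _) (by nlinarith)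
      nlinarith [sq_nonneg (x - t)]
  simp only [gaussianPDFReal]
  have hK : (0:ℝ) < (Real.sqrt (2 * Real.pi * (1:NNReal)))⁻¹ := by
    rw [inv_pos]
    refine Real.sqrt_pos.mpr (by positivity)
  have hexp : Real.exp (-(x - t)^2 / (2 * (1:NNReal))) ≤
      Real.exp (1/8) * (Real.exp (-(x - 0)^2 / (2 * (1:NNReal)))
        + Real.exp (-(x - 1)^2 / (2 * (1:NNReal)))) := by
    simp only [NNReal.coe_one, mul_one, sub_zero]
    have h1 : Real.exp (-(x - t)^2 / 2) ≤
        Real.exp (1/8) * Real.exp (-(min ((x-1)^2) (x^2)) / 2) := by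
      rw [← Real.exp_add]
      apply Real.exp_le_exp.mpr
      linarith
    refine h1.trans ?_
    have h2 : Real.exp (-(min ((x-1)^2) (x^2)) / 2) ≤
        Real.exp (-x^2 / 2) + Real.exp (-(x-1)^2 / 2) := by
      rcases min_cases ((x-1)^2) (x^2) with ⟨heq, _⟩ | ⟨heq, _⟩ <;> rw [heq]
      · have := Real.exp_nonneg (-x^2/2); linarith
      · have := Real.exp_nonneg (-(x-1)^2/2); linarith
    nlinarith [Real.exp_pos (1/8 : ℝ)]
  calc (Real.sqrt (2 * Real.pi * (1:NNReal)))⁻¹ * Real.exp (-(x - t)^2 / (2 * (1:NNReal)))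
      ≤ (Real.sqrt (2 * Real.pi * (1:NNReal)))⁻¹ *
        (Real.exp (1/8) * (Real.exp (-(x - 0)^2 / (2 * (1:NNReal)))
          + Real.exp (-(x - 1)^2 / (2 * (1:NNReal))))) := by
        exact mul_le_mul_of_nonneg_left hexp (le_of_lt hK)
    _ = Real.exp (1/8) * ((Real.sqrt (2 * Real.pi * (1:NNReal)))⁻¹ * Real.exp (-(x - 0)^2 / (2 * (1:NNReal)))
        + (Real.sqrt (2 * Real.pi * (1:NNReal)))⁻¹ * Real.exp (-(x - 1)^2 / (2 * (1:NNReal)))) := by ring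

/-- Continuity in the mean at 0 along the sequence `1/(n+1)`, for measures of a fixed set. -/
lemma gauss_tendsto (S : Set ℝ) (hS : MeasurableSet S) :
    Tendsto (fun n : ℕ => gaussianReal (((n:ℝ)+1)⁻¹) 1 S) atTop (nhds (gaussianReal 0 1 S)) := by
  have h1 : (1:NNReal) ≠ 0 := one_ne_zero
  have happly : ∀ t : ℝ, gaussianReal t 1 S = ∫⁻ x, S.indicator (gaussianPDF t 1) x := by
    intro t
    rw [gaussianReal_apply t h1 S, lintegral_indicator hS]
  simp_rw [happly]
  set bound : ℝ → ENNReal := fun x =>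
    ENNReal.ofReal (Real.exp (1/8)) * (gaussianPDF 0 1 x + gaussianPDF 1 1 x) with hbound_def
  have htn : ∀ n : ℕ, (0:ℝ) ≤ ((n:ℝ)+1)⁻¹ ∧ ((n:ℝ)+1)⁻¹ ≤ 1 := by
    intro n
    constructor
    · positivity
    · rw [inv_le_one_iff₀]; right; linarith [Nat.cast_nonneg (α := ℝ) n]
  refine tendsto_lintegral_of_dominated_convergence bound ?_ ?_ ?_ ?_
  · intro n
    exact (measurable_gaussianPDF _ _).indicator hS
  · intro n
    refine Filter.Eventually.of_forall fun x => ?_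
    refine le_trans (Set.indicator_le_self _ _ x) ?_
    rw [hbound_def]
    simp only [gaussianPDF]
    rw [← ENNReal.ofReal_add (gaussianPDFReal_nonneg _ _ _) (gaussianPDFReal_nonneg _ _ _),
      ← ENNReal.ofReal_mul (Real.exp_nonneg _)]
    exact ENNReal.ofReal_le_ofReal (gaussPDF_bound (htn n).1 (htn n).2 x)
  · rw [hbound_def]
    have : ∫⁻ x, ENNReal.ofReal (Real.exp (1/8)) * (gaussianPDF 0 1 x + gaussianPDF 1 1 x)
        = ENNReal.ofReal (Real.exp (1/8)) * (∫⁻ x, (gaussianPDF 0 1 x + gaussianPDF 1 1 x)) := by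
      rw [lintegral_const_mul]
      exact (measurable_gaussianPDF _ _).add (measurable_gaussianPDF _ _)
    rw [this, lintegral_add_left (measurable_gaussianPDF _ _),
      lintegral_gaussianPDF_eq_one _ h1, lintegral_gaussianPDF_eq_one _ h1]
    exact ENNReal.mul_ne_top ENNReal.ofReal_ne_top (by norm_num)
  · refine Filter.Eventually.of_forall fun x => ?_
    have hseq : Tendsto (fun n : ℕ => ((n:ℝ)+1)⁻¹) atTop (nhds 0) := by
      simpa using (tendsto_one_div_add_atTop_nhds_zero_nat : Tendsto (fun n : ℕ => 1 / ((n:ℝ) + 1)) atTop (nhds 0))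
    have hcont : Continuous (fun t : ℝ => gaussianPDF t 1 x) := by
      apply ENNReal.continuous_ofReal.comp
      simp only [gaussianPDFReal]
      fun_prop
    have hpt : Tendsto (fun n : ℕ => gaussianPDF (((n:ℝ)+1)⁻¹) 1 x) atTop
        (nhds (gaussianPDF 0 1 x)) := (hcont.tendsto 0).comp hseq
    by_cases hx : x ∈ S
    · simpa [Set.indicator_of_mem hx] using hpt
    · simp [Set.indicator_of_notMem hx]

theorem no_sign_determining_conditional_CI (c α : ℝ) (hc : 0 < c)
    (hα : 0 < α) (hα' : α < 1/2) :
    ¬ ∃ C : ℝ → Set ℝ,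
      -- (i) sign determination on {|y| > c}
      (∀ y : ℝ, c < |y| → C y ⊆ Set.Iic 0 ∨ C y ⊆ Set.Ioi 0) ∧
      -- (ii) measurability
      MeasurableSet {y : ℝ | c < |y| ∧ C y ⊆ Set.Iic 0} ∧
      (∀ t : ℝ, MeasurableSet {y : ℝ | t ∈ C y}) ∧
      -- (iii) conditional coverage at least 1 − α given |Y| > c, for Y ∼ N(θ, 1)
      (∀ t : ℝ, ENNReal.ofReal (1 - α) ≤
        gaussianReal t 1 ({y : ℝ | t ∈ C y} ∩ {y : ℝ | c < |y|}) /
          gaussianReal t 1 {y : ℝ | c < |y|}) := by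
  rintro ⟨C, hsign, hAmeas, hCmeas, hcov⟩
  set D : Set ℝ := {y : ℝ | c < |y|} with hD_def
  set A : Set ℝ := {y : ℝ | c < |y| ∧ C y ⊆ Set.Iic 0} with hA_def
  have hDmeas : MeasurableSet D := measurableSet_lt measurable_const measurable_abs
  -- positivity and finiteness of the measure of D
  have hD0 : ∀ t : ℝ, gaussianReal t 1 D ≠ 0 := by
    intro t h0
    have hvol : volume D = 0 := gaussianReal_absolutelyContinuous' t one_ne_zero h0
    have hsub : Set.Ioi c ⊆ D := by
      intro y hy
      simp only [hD_def, Set.mem_setOf_eq]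
      rw [abs_of_pos (lt_trans hc hy)]
      exact hy
    have : volume (Set.Ioi c) = 0 := measure_mono_null hsub hvol
    simp [Real.volume_Ioi] at this
  have hDtop : ∀ t : ℝ, gaussianReal t 1 D ≠ ⊤ := fun t => measure_ne_top _ _
  -- restated coverage
  have hcov' : ∀ t : ℝ, ENNReal.ofReal (1 - α) * gaussianReal t 1 D ≤
      gaussianReal t 1 ({y : ℝ | t ∈ C y} ∩ D) := by
    intro t
    have := hcov t
    rwa [ENNReal.le_div_iff_mul_le (Or.inl (hD0 t)) (Or.inl (hDtop t))] at this
  -- at t = 0 : A is covered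
  have h0 : ENNReal.ofReal (1 - α) * gaussianReal 0 1 D ≤ gaussianReal 0 1 A := by
    refine (hcov' 0).trans (measure_mono ?_)
    rintro y ⟨hy0, hyD⟩
    rcases hsign y hyD with h | h
    · exact ⟨hyD, h⟩
    · exact absurd (h hy0) (by simp)
  -- for t > 0: A is disjoint from the covered set
  have ht : ∀ t : ℝ, 0 < t →
      gaussianReal t 1 A + ENNReal.ofReal (1 - α) * gaussianReal t 1 D ≤
        gaussianReal t 1 D := by
    intro t htpos
    have hAD : A ⊆ D := fun y hy => hy.1
    have hdisj : Disjoint A ({y : ℝ | t ∈ C y} ∩ D) := by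
      rw [Set.disjoint_left]
      rintro y ⟨_, hyIic⟩ ⟨hyt, _⟩
      exact absurd (hyIic hyt) (not_le.mpr htpos)
    calc gaussianReal t 1 A + ENNReal.ofReal (1 - α) * gaussianReal t 1 D
        ≤ gaussianReal t 1 A + gaussianReal t 1 ({y : ℝ | t ∈ C y} ∩ D) :=
          add_le_add_right (hcov' t) _
      _ = gaussianReal t 1 (A ∪ ({y : ℝ | t ∈ C y} ∩ D)) := by
          rw [measure_union hdisj ((hCmeas t).inter hDmeas)]
      _ ≤ gaussianReal t 1 D := measure_mono (Set.union_subset hAD (Set.inter_subset_right))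
  -- take limits along t = 1/(n+1)
  have hlimA := gauss_tendsto A hAmeas
  have hlimD := gauss_tendsto D hDmeas
  have hlim : Tendsto (fun n : ℕ => gaussianReal (((n:ℝ)+1)⁻¹) 1 A +
      ENNReal.ofReal (1 - α) * gaussianReal (((n:ℝ)+1)⁻¹) 1 D) atTop
      (nhds (gaussianReal 0 1 A + ENNReal.ofReal (1 - α) * gaussianReal 0 1 D)) := by
    exact Tendsto.add hlimA (ENNReal.Tendsto.const_mul hlimD (Or.inr ENNReal.ofReal_ne_top))
  have hle : gaussianReal 0 1 A + ENNReal.ofReal (1 - α) * gaussianReal 0 1 D ≤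
      gaussianReal 0 1 D := by
    refine le_of_tendsto_of_tendsto' hlim hlimD fun n => ?_
    exact ht _ (by positivity)
  -- combine
  have hfinal : ENNReal.ofReal (1 - α) * gaussianReal 0 1 D +
      ENNReal.ofReal (1 - α) * gaussianReal 0 1 D ≤ gaussianReal 0 1 D :=
    le_trans (add_le_add_left h0 _) hle
  have hcomb : ENNReal.ofReal ((1 - α) + (1 - α)) * gaussianReal 0 1 D ≤
      1 * gaussianReal 0 1 D := by
    rw [one_mul, ENNReal.ofReal_add (by linarith) (by linarith), add_mul]
    exact hfinal
  have : ENNReal.ofReal ((1 - α) + (1 - α)) ≤ 1 :=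
    (ENNReal.mul_le_mul_iff_left (hD0 0) (hDtop 0)).mp hcomb
  rw [ENNReal.ofReal_le_one] at this
  linarith
end

section
/- Let α ∈ (0, 0.25), ψ ∈ [1/2, 0.9), and θ ∈ ℝ, and let Y ∼ N(θ, 1). Then Pr(|Y| ≥ c̄ and θ ∉ C_MQC(Y; α)) ≥ α/2, i.e., the probability that the MQC interval at level α both determines the sign and fails to cover θ is at least α/2. -/
/-!
STATEMENT 7: For α ∈ (0, 0.25), ψ ∈ [1/2, 0.9), θ ∈ ℝ and Y ∼ N(θ, 1), the
probability that the MQC interval at level α both determines the sign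
(i.e. |Y| ≥ c̄) and fails to cover θ is at least α/2.
-/

open MeasureTheory ProbabilityTheory Real Set Pointwise

/-- The standard normal cumulative distribution function `Φ`. -/
noncomputable def Phi : ℝ → ℝ := fun x => ProbabilityTheory.cdf (gaussianReal 0 1) x

/-- The inverse `Φ⁻¹` of the standard normal CDF (junk values off `(0,1)`). -/
noncomputable def PhiInv : ℝ → ℝ := Function.invFun Phi

section MQC

variable (F Finv : ℝ → ℝ)

/-- `c̄ = F⁻¹(1 − ψα)`. -/
noncomputable def cbar (α ψ : ℝ) : ℝ := Finv (1 - ψ * α)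

/-- `c_{α/2} = F⁻¹(1 − α/2)`. -/
noncomputable def chalf (α : ℝ) : ℝ := Finv (1 - α / 2)

/-- `c̃ = F⁻¹(1 − α + F(−c̄))`. -/
noncomputable def ctil (α ψ : ℝ) : ℝ := Finv (1 - α + F (-cbar Finv α ψ))

/-- `g(θ) = θ + F⁻¹(1 − α + F(−c̄ − θ))`. -/
noncomputable def gFun (α ψ : ℝ) (t : ℝ) : ℝ :=
  t + Finv (1 - α + F (-cbar Finv α ψ - t))

/-- The inverse of `g` on the interval `(c_{α/2} − c̄, ∞)`, where `g` is strictly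
increasing. -/
noncomputable def gInv (α ψ : ℝ) (y : ℝ) : ℝ :=
  sSup {t : ℝ | chalf Finv α - cbar Finv α ψ < t ∧ gFun F Finv α ψ t ≤ y}

/-- The modified quasi-conventional (MQC) interval for `y ≥ 0`, built from the
CDF `F` and quantile function `Finv`. -/
noncomputable def mqcGenNonneg (α ψ : ℝ) (y : ℝ) : Set ℝ :=
  if y < cbar Finv α ψ then
    Set.Ioo (-(cbar Finv α ψ + chalf Finv α)) (cbar Finv α ψ + chalf Finv α)
  else if y < chalf Finv α then Set.Ico 0 (y + chalf Finv α)
  else if y < ctil F Finv α ψ then Set.Ioo 0 (y + chalf Finv α)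
  else if y ≤ gFun F Finv α ψ (cbar Finv α ψ + chalf Finv α) then
    Set.Ioo (gInv F Finv α ψ y) (y + chalf Finv α)
  else if y < cbar Finv α ψ + 2 * chalf Finv α then
    Set.Ioo (cbar Finv α ψ + chalf Finv α) (y + chalf Finv α)
  else Set.Ioo (y - chalf Finv α) (y + chalf Finv α)

/-- The MQC interval `C_MQC(y; α)`, with `C_MQC(−y; α) = −C_MQC(y; α)`. -/
noncomputable def mqcGen (α ψ : ℝ) (y : ℝ) : Set ℝ :=
  if 0 ≤ y then mqcGenNonneg F Finv α ψ y else -mqcGenNonneg F Finv α ψ (-y)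

end MQC

/-- The standard-normal MQC interval `C_MQC(y; α)` with parameter `ψ`. -/
noncomputable def mqc (α ψ : ℝ) (y : ℝ) : Set ℝ := mqcGen Phi PhiInv α ψ y


namespace MQCaux

lemma npdf_pos (x : ℝ) : 0 < gaussianPDFReal 0 1 x := gaussianPDFReal_pos _ _ _ one_ne_zero

lemma npdf_cont : Continuous (gaussianPDFReal 0 1) := by
  unfold gaussianPDFReal
  fun_prop

lemma npdf_integrable : Integrable (gaussianPDFReal 0 1) := integrable_gaussianPDFReal 0 1

lemma npdf_apply (x : ℝ) :
    gaussianPDFReal 0 1 x = (Real.sqrt (2 * π))⁻¹ * Real.exp (-(x ^ 2) / 2) := by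
  simp [gaussianPDFReal]

lemma Phi_nonneg (x : ℝ) : 0 ≤ Phi x := cdf_nonneg _ _

lemma Phi_le_one (x : ℝ) : Phi x ≤ 1 := cdf_le_one _ _

lemma ofReal_Phi (x : ℝ) : ENNReal.ofReal (Phi x) = gaussianReal 0 1 (Iic x) :=
  ofReal_cdf _ x

lemma Phi_int (x : ℝ) : Phi x = ∫ t in Iic x, gaussianPDFReal 0 1 t := by
  have h1 := gaussianReal_apply_eq_integral 0 (one_ne_zero) (Iic x)
  rw [← ofReal_Phi] at h1
  exact (ENNReal.ofReal_eq_ofReal_iff (Phi_nonneg x)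
    (integral_nonneg fun t => (npdf_pos t).le)).mp h1

lemma int_Ioi_pos (x : ℝ) : 0 < ∫ t in Ioi x, gaussianPDFReal 0 1 t := by
  rw [setIntegral_pos_iff_support_of_nonneg_ae
    (ae_of_all _ fun t => (npdf_pos t).le) npdf_integrable.integrableOn]
  have hs : Function.support (gaussianPDFReal 0 1) = univ :=
    Set.eq_univ_of_forall fun t => (npdf_pos t).ne'
  rw [hs, Set.univ_inter, Real.volume_Ioi]
  exact ENNReal.zero_lt_top

lemma int_Iic_pos (x : ℝ) : 0 < ∫ t in Iic x, gaussianPDFReal 0 1 t := by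
  rw [setIntegral_pos_iff_support_of_nonneg_ae
    (ae_of_all _ fun t => (npdf_pos t).le) npdf_integrable.integrableOn]
  have hs : Function.support (gaussianPDFReal 0 1) = univ :=
    Set.eq_univ_of_forall fun t => (npdf_pos t).ne'
  rw [hs, Set.univ_inter, Real.volume_Iic]
  exact ENNReal.zero_lt_top

lemma int_Ioc_pos {x y : ℝ} (h : x < y) : 0 < ∫ t in Ioc x y, gaussianPDFReal 0 1 t := by
  rw [setIntegral_pos_iff_support_of_nonneg_ae
    (ae_of_all _ fun t => (npdf_pos t).le) npdf_integrable.integrableOn]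
  have hs : Function.support (gaussianPDFReal 0 1) = univ :=
    Set.eq_univ_of_forall fun t => (npdf_pos t).ne'
  rw [hs, Set.univ_inter, Real.volume_Ioc]
  exact ENNReal.ofReal_pos.mpr (by linarith)

lemma Phi_surv (x : ℝ) : 1 - Phi x = ∫ t in Ioi x, gaussianPDFReal 0 1 t := by
  have h := integral_add_compl (measurableSet_Iic (a := x)) npdf_integrable
  rw [compl_Iic, integral_gaussianPDFReal_eq_one 0 one_ne_zero, ← Phi_int] at h
  linarith

lemma Phi_pos (x : ℝ) : 0 < Phi x := by rw [Phi_int]; exact int_Iic_pos x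

lemma Phi_lt_one (x : ℝ) : Phi x < 1 := by
  have h := Phi_surv x
  have := int_Ioi_pos x
  linarith

lemma Phi_split {x y : ℝ} (h : x ≤ y) :
    Phi y = Phi x + ∫ t in Ioc x y, gaussianPDFReal 0 1 t := by
  rw [Phi_int, Phi_int, ← setIntegral_union (Iic_disjoint_Ioc le_rfl) measurableSet_Ioc
    npdf_integrable.integrableOn npdf_integrable.integrableOn, Iic_union_Ioc_eq_Iic h]

lemma Phi_strictMono : StrictMono Phi := by
  intro x y h
  have h1 := Phi_split h.le
  have h2 := int_Ioc_pos h
  linarith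

lemma Phi_mono : Monotone Phi := Phi_strictMono.monotone

lemma hasDerivAt_Phi (x : ℝ) : HasDerivAt Phi (gaussianPDFReal 0 1 x) x := by
  have key : Phi = fun t => Phi 0 + ∫ u in (0:ℝ)..t, gaussianPDFReal 0 1 u := by
    funext t
    rcases le_total 0 t with h | h
    · rw [intervalIntegral.integral_of_le h, ← Phi_split h]
    · rw [intervalIntegral.integral_symm, intervalIntegral.integral_of_le h]
      have := Phi_split h
      linarith
  rw [key]
  exact (intervalIntegral.integral_hasDerivAt_right
    npdf_integrable.intervalIntegrable
    (npdf_cont.stronglyMeasurableAtFilter _ _)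
    (npdf_cont.continuousAt)).const_add (Phi 0)

lemma Phi_continuous : Continuous Phi :=
  continuous_iff_continuousAt.mpr fun x => (hasDerivAt_Phi x).continuousAt

lemma Phi_neg (x : ℝ) : Phi (-x) = 1 - Phi x := by
  rw [Phi_int, Phi_surv]
  have h : ∀ t : ℝ, gaussianPDFReal 0 1 (-t) = gaussianPDFReal 0 1 t := by
    intro t; rw [npdf_apply, npdf_apply]; ring_nf
  calc ∫ t in Iic (-x), gaussianPDFReal 0 1 t
      = ∫ t in Iic (-x), gaussianPDFReal 0 1 (-t) := by
        refine setIntegral_congr_fun measurableSet_Iic fun t _ => (h t).symm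
    _ = ∫ t in Ioi x, gaussianPDFReal 0 1 t := by
        rw [integral_comp_neg_Iic, neg_neg]

lemma Phi_zero : Phi 0 = 1 / 2 := by
  have := Phi_neg 0
  rw [neg_zero] at this
  linarith

lemma Phi_tendsto_atBot : Filter.Tendsto Phi Filter.atBot (nhds 0) :=
  tendsto_cdf_atBot _

lemma Phi_tendsto_atTop : Filter.Tendsto Phi Filter.atTop (nhds 1) :=
  tendsto_cdf_atTop _

lemma Phi_exists {p : ℝ} (h0 : 0 < p) (h1 : p < 1) : ∃ x, Phi x = p := by
  obtain ⟨a, ha⟩ := (Phi_tendsto_atBot.eventually_lt_const h0).exists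
  obtain ⟨b, hb⟩ := (Phi_tendsto_atTop.eventually_const_lt h1).exists
  have hab : a ≤ b := by
    by_contra hcon
    push_neg at hcon
    have := Phi_mono hcon.le
    linarith
  obtain ⟨x, _, hx⟩ := intermediate_value_Icc hab Phi_continuous.continuousOn
    (⟨ha.le, hb.le⟩ : p ∈ Icc (Phi a) (Phi b))
  exact ⟨x, hx⟩

lemma Phi_PhiInv {p : ℝ} (h0 : 0 < p) (h1 : p < 1) : Phi (PhiInv p) = p :=
  Function.invFun_eq (Phi_exists h0 h1)

lemma PhiInv_lt_PhiInv {p q : ℝ} (h0 : 0 < p) (h1 : p < 1) (h0' : 0 < q) (h1' : q < 1) :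
    PhiInv p < PhiInv q ↔ p < q := by
  constructor
  · intro h
    have := Phi_strictMono h
    rwa [Phi_PhiInv h0 h1, Phi_PhiInv h0' h1'] at this
  · intro h
    by_contra hcon
    push_neg at hcon
    have := Phi_mono hcon
    rw [Phi_PhiInv h0 h1, Phi_PhiInv h0' h1'] at this
    linarith

lemma PhiInv_le_PhiInv {p q : ℝ} (h0 : 0 < p) (h1 : p < 1) (h0' : 0 < q) (h1' : q < 1) :
    PhiInv p ≤ PhiInv q ↔ p ≤ q := by
  constructor
  · intro h
    have := Phi_mono h
    rwa [Phi_PhiInv h0 h1, Phi_PhiInv h0' h1'] at this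
  · intro h
    by_contra hcon
    push_neg at hcon
    have := Phi_strictMono hcon
    rw [Phi_PhiInv h0 h1, Phi_PhiInv h0' h1'] at this
    linarith

lemma PhiInv_pos {p : ℝ} (h : 1 / 2 < p) (h1 : p < 1) : 0 < PhiInv p := by
  have hp := Phi_PhiInv (by linarith) h1
  by_contra hcon
  push_neg at hcon
  have := Phi_mono hcon
  rw [hp, Phi_zero] at this
  linarith

lemma gauss_singleton (θ x : ℝ) : gaussianReal θ 1 {x} = 0 :=
  gaussianReal_absolutelyContinuous θ one_ne_zero (measure_singleton x)

lemma gauss_Iic (θ t : ℝ) : gaussianReal θ 1 (Iic t) = ENNReal.ofReal (Phi (t - θ)) := by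
  have hmap : (gaussianReal 0 1).map (· + θ) = gaussianReal θ 1 := by
    rw [gaussianReal_map_add_const, zero_add]
  rw [← hmap, Measure.map_apply (measurable_add_const θ) measurableSet_Iic]
  have hpre : (· + θ) ⁻¹' (Iic t) = Iic (t - θ) := by
    ext z; simp [le_sub_iff_add_le]
  rw [hpre, ← ofReal_Phi]

lemma gauss_Ioi (θ t : ℝ) : gaussianReal θ 1 (Ioi t) = ENNReal.ofReal (1 - Phi (t - θ)) := by
  have h := measure_compl (μ := gaussianReal θ 1) (measurableSet_Iic (a := t))
    (measure_ne_top _ _)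
  rw [compl_Iic] at h
  rw [h, measure_univ, gauss_Iic, ← ENNReal.ofReal_one,
    ← ENNReal.ofReal_sub _ (Phi_nonneg _)]

lemma gauss_Ici (θ t : ℝ) : gaussianReal θ 1 (Ici t) = ENNReal.ofReal (1 - Phi (t - θ)) := by
  have heq : gaussianReal θ 1 (Ici t) = gaussianReal θ 1 (Ioi t) := by
    refine le_antisymm ?_ (measure_mono Ioi_subset_Ici_self)
    calc gaussianReal θ 1 (Ici t) ≤ gaussianReal θ 1 ({t} ∪ Ioi t) := by
          refine measure_mono fun z hz => ?_
          rcases (mem_Ici.mp hz).lt_or_eq with h | h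
          · exact Or.inr h
          · exact Or.inl h.symm
      _ ≤ gaussianReal θ 1 {t} + gaussianReal θ 1 (Ioi t) := measure_union_le _ _
      _ = gaussianReal θ 1 (Ioi t) := by rw [gauss_singleton, zero_add]
  rw [heq, gauss_Ioi]

end MQCaux

namespace MQCaux

lemma shifted_integrable (x : ℝ) : Integrable (fun s => gaussianPDFReal 0 1 (s + x)) := by
  have := integrable_gaussianPDFReal (0 - x) 1
  simp only [gaussianPDFReal_add]
  exact this

lemma surv_shift (x : ℝ) :
    1 - Phi x = ∫ s in Ioi (0 : ℝ), gaussianPDFReal 0 1 (s + x) := by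
  rw [Phi_surv]
  have A : MeasurableEmbedding (fun s : ℝ => s + x) :=
    (Homeomorph.addRight x).isClosedEmbedding.measurableEmbedding
  have h := A.setIntegral_map (μ := volume) (gaussianPDFReal 0 1) (Ioi x)
  rw [map_add_right_eq_self] at h
  rw [h]
  congr 1
  ext s
  simp

lemma hazard_mono {x y : ℝ} (hxy : x ≤ y) :
    gaussianPDFReal 0 1 x * (1 - Phi y) ≤ gaussianPDFReal 0 1 y * (1 - Phi x) := by
  rw [surv_shift y, surv_shift x, ← integral_const_mul, ← integral_const_mul]
  refine setIntegral_mono_on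
    (((shifted_integrable y).const_mul _).integrableOn)
    (((shifted_integrable x).const_mul _).integrableOn)
    measurableSet_Ioi ?_
  intro s hs
  have hs0 : (0:ℝ) < s := hs
  rw [npdf_apply, npdf_apply, npdf_apply, npdf_apply]
  have hE : Real.exp (-(x^2)/2) * Real.exp (-((s+y)^2)/2)
      ≤ Real.exp (-(y^2)/2) * Real.exp (-((s+x)^2)/2) := by
    rw [← Real.exp_add, ← Real.exp_add]
    apply Real.exp_le_exp.mpr
    nlinarith [mul_nonneg hs0.le (sub_nonneg.mpr hxy)]
  have hc : (0:ℝ) ≤ (Real.sqrt (2*π))⁻¹ := by positivity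
  nlinarith [mul_le_mul_of_nonneg_left hE (mul_nonneg hc hc)]

lemma surv_prod {a b u v : ℝ} (hav : a ≤ v) (hvu : v ≤ u) (hub : u ≤ b)
    (hsum : u + v = a + b) :
    (1 - Phi a) * (1 - Phi b) ≤ (1 - Phi u) * (1 - Phi v) := by
  set m : ℝ := (a + b) / 2 with hm
  set P : ℝ → ℝ := fun s => (1 - Phi (m + s)) * (1 - Phi (m - s)) with hP
  have hderiv : ∀ s : ℝ, HasDerivAt P
      (-(gaussianPDFReal 0 1 (m + s)) * (1 - Phi (m - s))
        + (1 - Phi (m + s)) * gaussianPDFReal 0 1 (m - s)) s := by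
    intro s
    have h1 : HasDerivAt (fun s : ℝ => 1 - Phi (m + s)) (-(gaussianPDFReal 0 1 (m + s))) s := by
      have hinner : HasDerivAt (fun s : ℝ => m + s) 1 s := (hasDerivAt_id s).const_add m
      have := (hasDerivAt_Phi (m + s)).comp s hinner
      simpa using this.const_sub 1
    have h2 : HasDerivAt (fun s : ℝ => 1 - Phi (m - s)) (gaussianPDFReal 0 1 (m - s)) s := by
      have hinner : HasDerivAt (fun s : ℝ => m + -s) (-1) s := (hasDerivAt_id s).neg.const_add m
      have := (hasDerivAt_Phi (m + -s)).comp s hinner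
      have h3 := this.const_sub 1
      simpa [sub_eq_add_neg] using h3
    exact h1.mul h2
  have hanti : AntitoneOn P (Icc 0 ((b - a) / 2)) := by
    refine antitoneOn_of_deriv_nonpos (convex_Icc _ _) ?_ ?_ ?_
    · exact Continuous.continuousOn
        (continuous_iff_continuousAt.mpr fun s => (hderiv s).continuousAt)
    · intro s _
      exact (hderiv s).differentiableAt.differentiableWithinAt
    · intro s hs
      rw [interior_Icc] at hs
      rw [(hderiv s).deriv]
      have hhaz := hazard_mono (show m - s ≤ m + s by linarith [hs.1])
      nlinarith [hhaz]
  have hmem1 : u - m ∈ Icc (0:ℝ) ((b - a) / 2) := ⟨by linarith, by linarith⟩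
  have hmem2 : (b - a) / 2 ∈ Icc (0:ℝ) ((b - a) / 2) := ⟨by linarith, le_rfl⟩
  have key := hanti hmem1 hmem2 (by linarith)
  have e1 : m + (u - m) = u := by ring
  have e2 : m - (u - m) = v := by linarith
  have e3 : m + (b - a) / 2 = b := by linarith
  have e4 : m - (b - a) / 2 = a := by linarith
  simp only [hP, e1, e2, e3, e4] at key
  linarith [key]

end MQCaux

namespace MQCaux

lemma gauss_Iio (θ t : ℝ) : gaussianReal θ 1 (Iio t) = ENNReal.ofReal (Phi (t - θ)) := by
  have heq : gaussianReal θ 1 (Iio t) = gaussianReal θ 1 (Iic t) := by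
    refine le_antisymm (measure_mono Iio_subset_Iic_self) ?_
    calc gaussianReal θ 1 (Iic t) ≤ gaussianReal θ 1 ({t} ∪ Iio t) := by
          refine measure_mono fun z hz => ?_
          rcases lt_or_eq_of_le (mem_Iic.mp hz) with h | h
          · exact Or.inr h
          · exact Or.inl h
      _ ≤ gaussianReal θ 1 {t} + gaussianReal θ 1 (Iio t) := measure_union_le _ _
      _ = gaussianReal θ 1 (Iio t) := by rw [gauss_singleton, zero_add]
  rw [heq, gauss_Iic]

lemma gInv_nonneg {α ψ : ℝ} (h0 : 0 ≤ chalf PhiInv α - cbar PhiInv α ψ) (y : ℝ) :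
    0 ≤ gInv Phi PhiInv α ψ y := by
  unfold gInv
  refine Real.sSup_nonneg fun t ht => ?_
  obtain ⟨ht1, -⟩ := ht
  linarith

lemma mqcNonneg_subset_Ici {α ψ y : ℝ} (hby : cbar PhiInv α ψ ≤ y)
    (h0 : 0 ≤ chalf PhiInv α - cbar PhiInv α ψ) (hb : 0 ≤ cbar PhiInv α ψ)
    (hc : 0 ≤ chalf PhiInv α) :
    mqcGenNonneg Phi PhiInv α ψ y ⊆ Ici 0 := by
  unfold mqcGenNonneg
  split_ifs with h1 h2 h3 h4 h5
  · exact absurd h1 (not_lt.mpr hby)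
  · exact fun x hx => hx.1
  · exact fun x hx => le_of_lt hx.1
  · exact fun x hx => le_trans (gInv_nonneg h0 y) (le_of_lt hx.1)
  · intro x hx
    have := hx.1
    simp only [mem_Ici]
    linarith
  · intro x hx
    have h6 := not_lt.mp h5
    have := hx.1
    simp only [mem_Ici]
    linarith

lemma mqcNonneg_subset_Ioi {α ψ y : ℝ} (hcy : chalf PhiInv α ≤ y)
    (h0 : 0 ≤ chalf PhiInv α - cbar PhiInv α ψ) (hb : 0 < cbar PhiInv α ψ)
    (hc : 0 < chalf PhiInv α) :
    mqcGenNonneg Phi PhiInv α ψ y ⊆ Ioi 0 := by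
  unfold mqcGenNonneg
  split_ifs with h1 h2 h3 h4 h5
  · exact absurd h1 (not_lt.mpr (by linarith))
  · exact absurd h2 (not_lt.mpr hcy)
  · exact fun x hx => hx.1
  · exact fun x hx => lt_of_le_of_lt (gInv_nonneg h0 y) hx.1
  · intro x hx
    have := hx.1
    simp only [mem_Ioi]
    linarith
  · intro x hx
    have h6 := not_lt.mp h5
    have := hx.1
    simp only [mem_Ioi]
    linarith

lemma psi_prod_bound {αr ψr : ℝ} (hα : 0 < αr) (hψ : 1/2 ≤ ψr) (hψ9 : ψr < 9/10) :
    αr^2/16 ≤ (1 - (1 - ψr*αr)) * (1 - (1 - (1-ψr)*αr)) := by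
  have h1 : (0:ℝ) ≤ (ψr - 1/2) * (9/10 - ψr) :=
    mul_nonneg (by linarith) (by linarith)
  have h2 : (0:ℝ) ≤ (9/10 - ψr) :=
    by linarith
  nlinarith [mul_nonneg h1 (mul_pos hα hα).le, mul_nonneg h2 (mul_pos hα hα).le]

lemma middle_bound {αr Su Sv P : ℝ} (hα : 0 < αr) (hSu : 0 ≤ Su) (hSv : 0 ≤ Sv)
    (hP : αr^2/16 ≤ P) (hprod : P ≤ Su * Sv) : αr/2 ≤ Su + Sv := by
  by_contra hcon
  push_neg at hcon
  nlinarith [hprod, hP, sq_nonneg (Su - Sv), hcon, hSu, hSv]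

end MQCaux

set_option maxHeartbeats 2000000 in
open MQCaux in
theorem mqc_sign_determining_noncoverage_lower_bound
    (α ψ θ : ℝ) (hα : 0 < α) (hα' : α < 0.25) (hψ : 1/2 ≤ ψ) (hψ' : ψ < 0.9) :
    ENNReal.ofReal (α / 2) ≤
      gaussianReal θ 1 {y : ℝ | cbar PhiInv α ψ ≤ |y| ∧ θ ∉ mqc α ψ y} := by
  have hα4 : α < 1/4 := by norm_num at hα'; exact hα'
  have hψ9 : ψ < 9/10 := by norm_num at hψ'; exact hψ'
  have hψ1 : ψ < 1 := by linarith
  set b := cbar PhiInv α ψ with hbdef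
  set c := chalf PhiInv α with hcdef
  set ct := ctil Phi PhiInv α ψ with hctdef
  have hψα0 : 0 < ψ * α := by nlinarith
  have hψα1 : ψ * α < 1/2 := by nlinarith
  have h1ψα0 : 0 < (1 - ψ) * α := by nlinarith
  have h1ψα1 : (1 - ψ) * α ≤ α / 2 := by nlinarith
  have hψαhalf : α / 2 ≤ ψ * α := by nlinarith
  have hPb : Phi b = 1 - ψ * α := by
    rw [hbdef]; unfold cbar; exact Phi_PhiInv (by linarith) (by linarith)
  have hb0 : 0 < b := by
    rw [hbdef]; unfold cbar; exact PhiInv_pos (by linarith) (by linarith)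
  have hPc : Phi c = 1 - α / 2 := by
    rw [hcdef]; unfold chalf; exact Phi_PhiInv (by linarith) (by linarith)
  have hc0 : 0 < c := by
    rw [hcdef]; unfold chalf; exact PhiInv_pos (by linarith) (by linarith)
  have hbc : b ≤ c := by
    rw [hbdef, hcdef]; unfold cbar chalf
    exact (PhiInv_le_PhiInv (by linarith) (by linarith) (by linarith)
      (by linarith)).mpr (by linarith)
  have hPnegb : Phi (-b) = ψ * α := by rw [Phi_neg, hPb]; ring
  have hcteq : ct = PhiInv (1 - (1 - ψ) * α) := by
    rw [hctdef]; unfold ctil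
    rw [← hbdef, hPnegb, show (1 : ℝ) - α + ψ * α = 1 - (1 - ψ) * α by ring]
  have hPct : Phi ct = 1 - (1 - ψ) * α := by
    rw [hcteq]; exact Phi_PhiInv (by linarith) (by linarith)
  have hcct : c ≤ ct := by
    rw [hcteq, hcdef]; unfold chalf
    exact (PhiInv_le_PhiInv (by linarith) (by linarith) (by linarith)
      (by linarith)).mpr (by linarith)
  -- ct ≤ b + 2c
  have hS2c : (1 - Phi 0) * (1 - Phi (2 * c)) ≤ (1 - Phi c) * (1 - Phi c) :=
    surv_prod (by linarith) le_rfl (by linarith) (by ring)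
  have hSb2c : (1 - Phi 0) * (1 - Phi (b + 2 * c)) ≤ (1 - Phi (2 * c)) * (1 - Phi b) :=
    surv_prod (a := 0) (b := b + 2 * c) (u := 2 * c) (v := b) hb0.le (by linarith)
      (by linarith) (by ring)
  have hT0 : 0 ≤ 1 - Phi (2 * c) := by linarith [Phi_le_one (2 * c)]
  have hTb : 0 ≤ 1 - Phi (b + 2 * c) := by linarith [Phi_le_one (b + 2 * c)]
  have hT : 1 - Phi (2 * c) ≤ α ^ 2 / 2 := by
    rw [Phi_zero, hPc] at hS2c; nlinarith [hS2c]
  have hBtail : 1 - Phi (b + 2 * c) ≤ ψ * α ^ 3 := by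
    rw [Phi_zero, hPb] at hSb2c
    nlinarith [hSb2c, mul_le_mul_of_nonneg_right hT hψα0.le]
  have hctb2c : ct ≤ b + 2 * c := by
    have h1 : ψ * α ^ 3 ≤ (1 - ψ) * α := by nlinarith
    have h2 : Phi ct ≤ Phi (b + 2 * c) := by rw [hPct]; linarith
    by_contra hcon
    push_neg at hcon
    exact absurd (Phi_strictMono hcon) (not_lt.mpr h2)
  -- g(b+c) ≤ b+2c
  have hgbc : gFun Phi PhiInv α ψ (b + c) ≤ b + 2 * c := by
    unfold gFun
    rw [← hbdef]
    have harg1 : Phi (-b - (b + c)) ≤ α / 2 := by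
      have := Phi_mono (show -b - (b + c) ≤ -c by linarith)
      rw [Phi_neg, hPc] at this; linarith
    have harg0 : 0 < Phi (-b - (b + c)) := Phi_pos _
    have hle : PhiInv (1 - α + Phi (-b - (b + c))) ≤ c := by
      have h2 : Phi (PhiInv (1 - α + Phi (-b - (b + c)))) ≤ Phi c := by
        rw [Phi_PhiInv (by linarith) (by linarith), hPc]; linarith
      by_contra hcon
      push_neg at hcon
      exact absurd (Phi_strictMono hcon) (not_lt.mpr h2)
    linarith
  -- t < g t for t > c - b
  have hglt : ∀ t : ℝ, c - b < t → t < gFun Phi PhiInv α ψ t := by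
    intro t ht
    have harg1 : Phi (-b - t) ≤ α / 2 := by
      have := Phi_mono (show -b - t ≤ -c by linarith)
      rw [Phi_neg, hPc] at this; linarith
    have harg0 : 0 < Phi (-b - t) := Phi_pos _
    have hpos : 0 < PhiInv (1 - α + Phi (-b - t)) :=
      PhiInv_pos (by linarith) (by linarith)
    have hEq : gFun Phi PhiInv α ψ t = t + PhiInv (1 - α + Phi (-b - t)) := by
      unfold gFun; rw [← hbdef]
    linarith [hEq, hpos]
  -- exclusion lemma for the "big y" region
  have hbig : ∀ t y' : ℝ, c - b < t → t ≤ b + c → gFun Phi PhiInv α ψ t < y' → ct < y' →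
      t ∉ mqcGenNonneg Phi PhiInv α ψ y' := by
    intro t y' ht1 ht2 hyg hyct hmem
    unfold mqcGenNonneg at hmem
    simp only [← hbdef, ← hcdef, ← hctdef] at hmem
    rw [if_neg (not_lt.mpr (by linarith : b ≤ y'))] at hmem
    rw [if_neg (not_lt.mpr (by linarith : c ≤ y'))] at hmem
    rw [if_neg (not_lt.mpr (by linarith : ct ≤ y'))] at hmem
    by_cases hy4 : y' ≤ gFun Phi PhiInv α ψ (b + c)
    · rw [if_pos hy4] at hmem
      have hSup : t ≤ gInv Phi PhiInv α ψ y' := by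
        unfold gInv
        simp only [← hbdef, ← hcdef]
        refine le_csSup ⟨y', fun s hs => ?_⟩ ⟨ht1, hyg.le⟩
        obtain ⟨hs1, hs2⟩ := hs
        exact le_trans (hglt s hs1).le hs2
      exact absurd hmem.1 (not_lt.mpr hSup)
    · rw [if_neg hy4] at hmem
      by_cases hy5 : y' < b + 2 * c
      · rw [if_pos hy5] at hmem
        exact absurd hmem.1 (not_lt.mpr ht2)
      · rw [if_neg hy5] at hmem
        have h6 := not_lt.mp hy5
        have := hmem.1
        linarith
  -- exclusion lemma for the far region
  have hfar : ∀ t y' : ℝ, b + c < t → t + c ≤ y' → t ∉ mqcGenNonneg Phi PhiInv α ψ y' := by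
    intro t y' ht hy hmem
    have hyb : b + 2 * c < y' := by linarith
    unfold mqcGenNonneg at hmem
    simp only [← hbdef, ← hcdef, ← hctdef] at hmem
    rw [if_neg (not_lt.mpr (by linarith : b ≤ y'))] at hmem
    rw [if_neg (not_lt.mpr (by linarith : c ≤ y'))] at hmem
    rw [if_neg (not_lt.mpr (by linarith : ct ≤ y'))] at hmem
    rw [if_neg (not_le.mpr (by linarith : gFun Phi PhiInv α ψ (b + c) < y'))] at hmem
    rw [if_neg (not_lt.mpr (by linarith : b + 2 * c ≤ y'))] at hmem
    have := hmem.1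
    linarith
  -- scalar bound for the middle case
  have hsum3 : ∀ t : ℝ, c - b < t → t ≤ b + c →
      α / 2 ≤ Phi (-b - t) + (1 - Phi (max (gFun Phi PhiInv α ψ t) ct - t)) := by
    intro t ht1 ht2
    have hw0 : 0 < Phi (-b - t) := Phi_pos _
    have hwhalf : Phi (-b - t) ≤ α / 2 := by
      have := Phi_mono (show -b - t ≤ -c by linarith)
      rw [Phi_neg, hPc] at this; linarith
    have hgt : gFun Phi PhiInv α ψ t = t + PhiInv (1 - α + Phi (-b - t)) := by
      unfold gFun; rw [← hbdef]
    have hPq : Phi (PhiInv (1 - α + Phi (-b - t))) = 1 - α + Phi (-b - t) :=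
      Phi_PhiInv (by linarith) (by linarith)
    rcases le_or_gt ct (gFun Phi PhiInv α ψ t) with hcase | hcase
    · rw [max_eq_left hcase, hgt, show t + PhiInv (1 - α + Phi (-b - t)) - t
        = PhiInv (1 - α + Phi (-b - t)) by ring, hPq]
      linarith
    · rw [max_eq_right hcase.le]
      have hwu : Phi (-b - t) = 1 - Phi (b + t) := by
        rw [show -b - t = -(b + t) by ring, Phi_neg]
      rw [hwu]
      rcases le_or_gt (ct - t) b with hvb | hvb
      · have h1 : 1 - Phi b ≤ 1 - Phi (ct - t) := by linarith [Phi_mono hvb]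
        have h2 : 0 ≤ 1 - Phi (b + t) := by linarith [Phi_le_one (b + t)]
        rw [hPb] at h1
        linarith
      · have hbu : b ≤ b + t := by linarith
        have huct : b + t ≤ ct := by linarith
        have hvct : ct - t ≤ ct := by linarith
        have hprod : (1 - Phi b) * (1 - Phi ct)
            ≤ (1 - Phi (b + t)) * (1 - Phi (ct - t)) := by
          rcases le_total (ct - t) (b + t) with hvu | huv
          · exact surv_prod hvb.le hvu huct (by ring)
          · have h := surv_prod (a := b) (b := ct) (u := ct - t) (v := b + t)
              hbu huv hvct (by ring)
            have hcomm := mul_comm (1 - Phi (ct - t)) (1 - Phi (b + t))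
            linarith [h, hcomm]
        have hP : α^2/16 ≤ (1 - Phi b) * (1 - Phi ct) := by
          rw [hPb, hPct]
          exact psi_prod_bound hα hψ hψ9
        have hSu : 0 ≤ 1 - Phi (b + t) := by linarith [Phi_le_one (b + t)]
        have hSv : 0 ≤ 1 - Phi (ct - t) := by linarith [Phi_le_one (ct - t)]
        have := middle_bound hα hSu hSv hP hprod
        linarith
  -- now the case analysis on θ
  rcases lt_trichotomy θ 0 with hθneg | hθzero | hθpos
  · -- θ < 0
    rcases le_or_gt (-θ) (c - b) with ht1 | ht1
    · -- mirror case 2: event Ici b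
      refine le_trans ?_ (measure_mono (show Ici b ⊆ _ from ?_))
      · rw [gauss_Ici]
        apply ENNReal.ofReal_le_ofReal
        have := Phi_mono (show b - θ ≤ c by linarith)
        linarith [hPc]
      · intro y hy
        have hyb : b ≤ y := hy
        refine ⟨by rw [abs_of_nonneg (by linarith)]; exact hyb, fun hmem => ?_⟩
        unfold mqc mqcGen at hmem
        rw [if_pos (by linarith : (0:ℝ) ≤ y)] at hmem
        have h := mqcNonneg_subset_Ici (by rw [← hbdef]; exact hyb)
          (by rw [← hbdef, ← hcdef]; linarith) (by rw [← hbdef]; exact hb0.le)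
          (by rw [← hcdef]; exact hc0.le) hmem
        simp only [mem_Ici] at h
        linarith
    · rcases le_or_gt (-θ) (b + c) with ht2 | ht2
      · -- mirror case 3: event Iio (-M') ∪ Ici b
        set M' := max (gFun Phi PhiInv α ψ (-θ)) ct with hMdef
        have hctM : ct ≤ M' := le_max_right _ _
        have hM0 : 0 < M' := by linarith [hcct, hc0]
        have hdisj : Disjoint (Iio (-M')) (Ici b) := by
          rw [Set.disjoint_left]
          intro z hz1 hz2
          simp only [mem_Iio, mem_Ici] at hz1 hz2
          linarith
        refine le_trans ?_ (measure_mono (show Iio (-M') ∪ Ici b ⊆ _ from ?_))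
        · rw [measure_union hdisj measurableSet_Ici, gauss_Iio, gauss_Ici]
          have e1 : Phi (-M' - θ) = 1 - Phi (M' - -θ) := by
            rw [show -M' - θ = -(M' - -θ) by ring, Phi_neg]
          have e2 : 1 - Phi (b - θ) = Phi (-b - -θ) := by
            rw [show -b - -θ = -(b - θ) by ring, Phi_neg]
          have hkey := hsum3 (-θ) ht1 ht2
          rw [← ENNReal.ofReal_add (Phi_nonneg _) (by linarith [Phi_le_one (b - θ)])]
          apply ENNReal.ofReal_le_ofReal
          rw [e1, e2]
          linarith [hkey]
        · rintro y (hy | hy)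
          · have hyM : y < -M' := hy
            have hy0 : y < 0 := by linarith
            have hyct : ct < -y := by linarith
            have hyg : gFun Phi PhiInv α ψ (-θ) < -y := by
              have := le_max_left (gFun Phi PhiInv α ψ (-θ)) ct
              rw [← hMdef] at this
              linarith
            refine ⟨by rw [abs_of_nonpos hy0.le]; linarith [hcct, hbc], fun hmem => ?_⟩
            unfold mqc mqcGen at hmem
            rw [if_neg (by linarith : ¬ (0:ℝ) ≤ y)] at hmem
            rw [Set.mem_neg] at hmem
            exact hbig (-θ) (-y) ht1 ht2 hyg hyct hmem
          · have hyb : b ≤ y := hy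
            refine ⟨by rw [abs_of_nonneg (by linarith)]; exact hyb, fun hmem => ?_⟩
            unfold mqc mqcGen at hmem
            rw [if_pos (by linarith : (0:ℝ) ≤ y)] at hmem
            have h := mqcNonneg_subset_Ici (by rw [← hbdef]; exact hyb)
              (by rw [← hbdef, ← hcdef]; linarith) (by rw [← hbdef]; exact hb0.le)
              (by rw [← hcdef]; exact hc0.le) hmem
            simp only [mem_Ici] at h
            linarith
      · -- mirror case 4: event Iic (θ - c)
        refine le_trans ?_ (measure_mono (show Iic (θ - c) ⊆ _ from ?_))
        · rw [gauss_Iic, show θ - c - θ = -c by ring, Phi_neg, hPc]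
          exact ENNReal.ofReal_le_ofReal (by linarith)
        · intro y hy
          have hyc : y ≤ θ - c := hy
          have hy0 : y < 0 := by linarith
          refine ⟨by rw [abs_of_nonpos hy0.le]; linarith, fun hmem => ?_⟩
          unfold mqc mqcGen at hmem
          rw [if_neg (by linarith : ¬ (0:ℝ) ≤ y)] at hmem
          rw [Set.mem_neg] at hmem
          exact hfar (-θ) (-y) ht2 (by linarith) hmem
  · -- θ = 0 : event Ici c
    subst hθzero
    refine le_trans ?_ (measure_mono (show Ici c ⊆ _ from ?_))
    · rw [gauss_Ici, sub_zero, hPc]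
      exact ENNReal.ofReal_le_ofReal (by linarith)
    · intro y hy
      have hyc : c ≤ y := hy
      refine ⟨by rw [abs_of_nonneg (by linarith)]; linarith, fun hmem => ?_⟩
      unfold mqc mqcGen at hmem
      rw [if_pos (by linarith : (0:ℝ) ≤ y)] at hmem
      have h := mqcNonneg_subset_Ioi (by rw [← hcdef]; exact hyc)
        (by rw [← hbdef, ← hcdef]; linarith) (by rw [← hbdef]; exact hb0)
        (by rw [← hcdef]; exact hc0) hmem
      simp only [mem_Ioi] at h
      linarith
  · -- θ > 0
    rcases le_or_gt θ (c - b) with ht1 | ht1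
    · -- case 2 : event Iic (-b)
      refine le_trans ?_ (measure_mono (show Iic (-b) ⊆ _ from ?_))
      · rw [gauss_Iic]
        apply ENNReal.ofReal_le_ofReal
        have := Phi_mono (show -c ≤ -b - θ by linarith)
        rw [Phi_neg, hPc] at this
        linarith
      · intro y hy
        have hyb : y ≤ -b := hy
        have hy0 : y < 0 := by linarith
        refine ⟨by rw [abs_of_nonpos hy0.le]; linarith, fun hmem => ?_⟩
        unfold mqc mqcGen at hmem
        rw [if_neg (by linarith : ¬ (0:ℝ) ≤ y)] at hmem
        rw [Set.mem_neg] at hmem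
        have h := mqcNonneg_subset_Ici (by rw [← hbdef]; linarith)
          (by rw [← hbdef, ← hcdef]; linarith) (by rw [← hbdef]; exact hb0.le)
          (by rw [← hcdef]; exact hc0.le) hmem
        simp only [mem_Ici] at h
        linarith
    · rcases le_or_gt θ (b + c) with ht2 | ht2
      · -- case 3 : event Iic (-b) ∪ Ioi M
        set M := max (gFun Phi PhiInv α ψ θ) ct with hMdef
        have hctM : ct ≤ M := le_max_right _ _
        have hM0 : 0 < M := by linarith [hcct, hc0]
        have hbM : -b ≤ M := by linarith
        refine le_trans ?_ (measure_mono (show Iic (-b) ∪ Ioi M ⊆ _ from ?_))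
        · rw [measure_union (Set.Iic_disjoint_Ioi hbM) measurableSet_Ioi,
            gauss_Iic, gauss_Ioi]
          have hkey := hsum3 θ ht1 ht2
          rw [← ENNReal.ofReal_add (Phi_nonneg _) (by linarith [Phi_le_one (M - θ)])]
          apply ENNReal.ofReal_le_ofReal
          linarith [hkey]
        · rintro y (hy | hy)
          · have hyb : y ≤ -b := hy
            have hy0 : y < 0 := by linarith
            refine ⟨by rw [abs_of_nonpos hy0.le]; linarith, fun hmem => ?_⟩
            unfold mqc mqcGen at hmem
            rw [if_neg (by linarith : ¬ (0:ℝ) ≤ y)] at hmem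
            rw [Set.mem_neg] at hmem
            have h := mqcNonneg_subset_Ici (by rw [← hbdef]; linarith)
              (by rw [← hbdef, ← hcdef]; linarith) (by rw [← hbdef]; exact hb0.le)
              (by rw [← hcdef]; exact hc0.le) hmem
            simp only [mem_Ici] at h
            linarith
          · have hyM : M < y := hy
            have hyct : ct < y := by linarith
            have hyg : gFun Phi PhiInv α ψ θ < y := by
              have := le_max_left (gFun Phi PhiInv α ψ θ) ct
              rw [← hMdef] at this
              linarith
            have hy0 : 0 < y := by linarith [hcct, hc0]
            refine ⟨by rw [abs_of_nonneg hy0.le]; linarith [hcct, hbc], fun hmem => ?_⟩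
            unfold mqc mqcGen at hmem
            rw [if_pos hy0.le] at hmem
            exact hbig θ y ht1 ht2 hyg hyct hmem
      · -- case 4 : event Ici (θ + c)
        refine le_trans ?_ (measure_mono (show Ici (θ + c) ⊆ _ from ?_))
        · rw [gauss_Ici, show θ + c - θ = c by ring, hPc]
          exact ENNReal.ofReal_le_ofReal (by linarith)
        · intro y hy
          have hyc : θ + c ≤ y := hy
          have hy0 : 0 < y := by linarith
          refine ⟨by rw [abs_of_nonneg hy0.le]; linarith, fun hmem => ?_⟩
          unfold mqc mqcGen at hmem
          rw [if_pos hy0.le] at hmem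
          exact hfar θ y ht2 hyc hmem
end

section
/- Let Φ denote the standard normal CDF. For every α ∈ (0, 0.25) and every ψ ∈ [1/2, 0.9], writing c̄ = Φ^{-1}(1 − ψα) and c̃ = Φ^{-1}(1 − α + Φ(−c̄)), one has c̃ < 2c̄ + Φ^{-1}(1 − α/2). (Equivalently, the critical value ψ_1 at which c̃ = 2c̄ + Φ^{-1}(1 − α/2) satisfies ψ_1 > 0.9 for all α ∈ (0, 0.25).) -/
/-!
STATEMENT 8: For every α ∈ (0, 0.25) and ψ ∈ [1/2, 0.9], with c̄ = Φ⁻¹(1 − ψα) and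
c̃ = Φ⁻¹(1 − α + Φ(−c̄)), one has c̃ < 2c̄ + Φ⁻¹(1 − α/2).
-/

open MeasureTheory ProbabilityTheory

section Aux
open Set Real

local notation "g" => gaussianPDFReal 0 1

lemma g_integrable : Integrable (fun t : ℝ => g t) := integrable_gaussianPDFReal 0 1

lemma setIntegral_g_pos {s : Set ℝ} (hs : MeasurableSet s) (h : 0 < volume s) :
    0 < ∫ t in s, g t := by
  rw [setIntegral_pos_iff_support_of_nonneg_ae
    (ae_of_all _ fun t => gaussianPDFReal_nonneg 0 1 t) g_integrable.integrableOn]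
  have : Function.support (fun t : ℝ => g t) = univ := by
    ext t; simp [Function.mem_support, (gaussianPDFReal_pos 0 1 t one_ne_zero).ne']
  rwa [this, univ_inter]

lemma Phi_eq_integral (x : ℝ) : Phi x = ∫ t in Iic x, g t := by
  rw [Phi, cdf_eq_real, measureReal_def, gaussianReal_apply_eq_integral _ one_ne_zero,
    ENNReal.toReal_ofReal (integral_nonneg fun t => gaussianPDFReal_nonneg 0 1 t)]

lemma Phi_strictMono : StrictMono Phi := by
  intro x y hxy
  have hsplit : Phi y = Phi x + ∫ t in Ioc x y, g t := by
    rw [Phi_eq_integral, Phi_eq_integral,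
      ← setIntegral_union (Iic_disjoint_Ioc le_rfl) measurableSet_Ioc
        g_integrable.integrableOn g_integrable.integrableOn, Iic_union_Ioc_eq_Iic hxy.le]
  have hpos : 0 < ∫ t in Ioc x y, g t := by
    apply setIntegral_g_pos measurableSet_Ioc
    rw [Real.volume_Ioc]; simp [hxy]
  linarith

lemma Phi_continuous : Continuous Phi := by
  have h : ∀ x : ℝ, Phi x = Phi 0 + ∫ t in (0:ℝ)..x, g t := by
    intro x
    rcases le_total 0 x with hx | hx
    · rw [Phi_eq_integral, Phi_eq_integral,
        intervalIntegral.integral_of_le hx,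
        ← setIntegral_union (Iic_disjoint_Ioc le_rfl) measurableSet_Ioc
          g_integrable.integrableOn g_integrable.integrableOn, Iic_union_Ioc_eq_Iic hx]
    · have : Phi 0 = Phi x + ∫ t in Ioc x 0, g t := by
        rw [Phi_eq_integral, Phi_eq_integral,
          ← setIntegral_union (Iic_disjoint_Ioc le_rfl) measurableSet_Ioc
            g_integrable.integrableOn g_integrable.integrableOn, Iic_union_Ioc_eq_Iic hx]
      rw [intervalIntegral.integral_of_ge hx]
      linarith
  have : Continuous fun x => Phi 0 + ∫ t in (0:ℝ)..x, g t :=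
    continuous_const.add (g_integrable.continuous_primitive 0)
  exact this.congr fun x => (h x).symm

lemma integral_g_Ioi_add (x : ℝ) : Phi x + ∫ t in Ioi x, g t = 1 := by
  rw [Phi_eq_integral, ← integral_gaussianPDFReal_eq_one 0 one_ne_zero,
    ← setIntegral_union (Iic_disjoint_Ioi le_rfl) measurableSet_Ioi
      g_integrable.integrableOn g_integrable.integrableOn, Iic_union_Ioi,
    setIntegral_univ]

lemma one_sub_Phi (x : ℝ) : 1 - Phi x = ∫ t in Ioi x, g t := by
  have := integral_g_Ioi_add x; linarith

lemma g_even (t : ℝ) : g (-t) = g t := by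
  simp [gaussianPDFReal, neg_sq]

lemma Phi_neg (x : ℝ) : Phi (-x) = 1 - Phi x := by
  rw [Phi_eq_integral, one_sub_Phi]
  calc ∫ t in Iic (-x), g t = ∫ t in Iic (-x), g (-t) := by
        exact setIntegral_congr_fun measurableSet_Iic fun t _ => (g_even t).symm
    _ = ∫ t in Ioi (- -x), g t := integral_comp_neg_Iic (-x) _
    _ = ∫ t in Ioi x, g t := by rw [neg_neg]

lemma Phi_pos (x : ℝ) : 0 < Phi x := by
  rw [Phi_eq_integral]
  exact setIntegral_g_pos measurableSet_Iic (by simp)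

lemma Phi_lt_one (x : ℝ) : Phi x < 1 := by
  have h := integral_g_Ioi_add x
  have : 0 < ∫ t in Ioi x, g t := setIntegral_g_pos measurableSet_Ioi (by simp)
  linarith

lemma Phi_surj {p : ℝ} (h0 : 0 < p) (h1 : p < 1) : ∃ x, Phi x = p := by
  have hbot : Filter.Tendsto Phi Filter.atBot (nhds 0) := tendsto_cdf_atBot _
  have htop : Filter.Tendsto Phi Filter.atTop (nhds 1) := tendsto_cdf_atTop _
  have h1' : ∀ᶠ x in Filter.atBot, Phi x < p := hbot.eventually_lt_const h0
  have h2' : ∀ᶠ x in Filter.atTop, p < Phi x := htop.eventually_const_lt h1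
  obtain ⟨a, ha⟩ := h1'.exists
  obtain ⟨b, hb⟩ := h2'.exists
  have hab : a ≤ b := by
    by_contra hba
    exact absurd (Phi_strictMono (lt_of_not_ge hba)) (by linarith)
  have := intermediate_value_Icc hab Phi_continuous.continuousOn
  obtain ⟨x, _, hx⟩ := this ⟨ha.le, hb.le⟩
  exact ⟨x, hx⟩

lemma Phi_PhiInv {p : ℝ} (h0 : 0 < p) (h1 : p < 1) : Phi (PhiInv p) = p :=
  Function.invFun_eq (Phi_surj h0 h1)

lemma PhiInv_lt_iff {p : ℝ} (h0 : 0 < p) (h1 : p < 1) (y : ℝ) :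
    PhiInv p < y ↔ p < Phi y := by
  rw [← Phi_PhiInv h0 h1, Phi_strictMono.lt_iff_lt, Phi_PhiInv h0 h1]

lemma le_PhiInv_iff {p : ℝ} (h0 : 0 < p) (h1 : p < 1) (y : ℝ) :
    y ≤ PhiInv p ↔ Phi y ≤ p := by
  rw [← Phi_PhiInv h0 h1, Phi_strictMono.le_iff_le, Phi_PhiInv h0 h1]

lemma Phi_zero : Phi 0 = 1/2 := by
  have := Phi_neg 0
  rw [neg_zero] at this; linarith

lemma g_le (t : ℝ) : g t ≤ (Real.sqrt (2 * π))⁻¹ := by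
  simp only [gaussianPDFReal, sub_zero, NNReal.coe_one, mul_one]
  calc (Real.sqrt (2 * π))⁻¹ * Real.exp (-t ^ 2 / 2)
      ≤ (Real.sqrt (2 * π))⁻¹ * 1 := by
        apply mul_le_mul_of_nonneg_left _ (by positivity)
        rw [← Real.exp_zero]
        apply Real.exp_le_exp.mpr
        nlinarith [sq_nonneg t]
    _ = (Real.sqrt (2 * π))⁻¹ := mul_one _

lemma Phi_le_linear {x : ℝ} (hx : 0 ≤ x) : Phi x ≤ 1/2 + x * (Real.sqrt (2 * π))⁻¹ := by
  have hsplit : Phi x = Phi 0 + ∫ t in Ioc 0 x, g t := by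
    rw [Phi_eq_integral, Phi_eq_integral,
      ← setIntegral_union (Iic_disjoint_Ioc le_rfl) measurableSet_Ioc
        g_integrable.integrableOn g_integrable.integrableOn, Iic_union_Ioc_eq_Iic hx]
  have hbound : ∫ t in Ioc 0 x, g t ≤ ∫ _ in Ioc (0:ℝ) x, (Real.sqrt (2 * π))⁻¹ := by
    apply setIntegral_mono_on g_integrable.integrableOn
      (integrableOn_const (by simp))
      measurableSet_Ioc fun t _ => g_le t
  rw [setIntegral_const] at hbound
  rw [hsplit, Phi_zero]
  have : volume.real (Ioc (0:ℝ) x) = x := by simp [measureReal_def, hx]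
  rw [this, smul_eq_mul] at hbound
  linarith

lemma g_shift (t s : ℝ) : g (t + s) = Real.exp (-s^2/2 - s*t) * g t := by
  simp only [gaussianPDFReal, sub_zero, NNReal.coe_one, mul_one]
  rw [← mul_assoc, mul_comm (Real.exp (-s^2/2 - s*t)), mul_assoc, ← Real.exp_add]
  ring_nf

lemma tail_shift {b s : ℝ} (hs : 0 ≤ s) :
    ∫ t in Ioi (b + s), g t ≤ Real.exp (-s^2/2 - s*b) * ∫ t in Ioi b, g t := by
  have A : MeasurableEmbedding (fun x : ℝ => x + s) :=
    (Homeomorph.addRight s).isClosedEmbedding.measurableEmbedding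
  have hmap := A.setIntegral_map (μ := volume) (fun t => g t) (Ioi (b + s))
  rw [map_add_right_eq_self volume s] at hmap
  have hpre : (fun x : ℝ => x + s) ⁻¹' Ioi (b + s) = Ioi b := by
    ext t; simp
  rw [hpre] at hmap
  rw [hmap]
  have hint1 : IntegrableOn (fun t : ℝ => g (t + s)) (Ioi b) :=
    (g_integrable.comp_add_right s).integrableOn
  have hint2 : IntegrableOn (fun t : ℝ => Real.exp (-s^2/2 - s*b) * g t) (Ioi b) :=
    (g_integrable.const_mul _).integrableOn
  calc ∫ t in Ioi b, g (t + s)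
      ≤ ∫ t in Ioi b, Real.exp (-s^2/2 - s*b) * g t := by
        apply setIntegral_mono_on hint1 hint2 measurableSet_Ioi
        intro t ht
        rw [g_shift]
        apply mul_le_mul_of_nonneg_right _ (gaussianPDFReal_nonneg 0 1 t)
        apply Real.exp_le_exp.mpr
        have : b ≤ t := (le_of_lt ht)
        nlinarith
    _ = Real.exp (-s^2/2 - s*b) * ∫ t in Ioi b, g t := integral_const_mul _ _

lemma exp_bound : Real.exp (-1.7424) < 0.2 := by
  have h16 : Real.exp 1.7424 = Real.exp 0.1089 ^ (16:ℕ) := by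
    rw [← Real.exp_nat_mul]; norm_num
  have h1 : (1.1089:ℝ) ≤ Real.exp 0.1089 := by
    have := Real.add_one_le_exp (0.1089:ℝ); linarith
  have h2 : (5:ℝ) < 1.1089 ^ (16:ℕ) := by norm_num
  have h3 : (1.1089:ℝ) ^ (16:ℕ) ≤ Real.exp 0.1089 ^ (16:ℕ) :=
    pow_le_pow_left₀ (by norm_num) h1 16
  have h5 : (5:ℝ) < Real.exp 1.7424 := by rw [h16]; linarith
  rw [Real.exp_neg]
  have h6 : (5:ℝ)⁻¹ = 0.2 := by norm_num
  rw [← h6]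
  exact inv_strictAnti₀ (by norm_num) h5

theorem ctil_lt_two_cbar_add_chalf (α ψ : ℝ)
    (hα : 0 < α) (hα' : α < 0.25) (hψ : 1/2 ≤ ψ) (hψ' : ψ ≤ 0.9) :
    PhiInv (1 - α + Phi (-PhiInv (1 - ψ * α))) <
      2 * PhiInv (1 - ψ * α) + PhiInv (1 - α / 2) := by
  have hψα0 : 0 < ψ * α := by nlinarith
  have hψα1 : ψ * α < 0.225 := by nlinarith
  have h10 : 0 < 1 - ψ * α := by linarith
  have h11 : 1 - ψ * α < 1 := by linarith
  have h20 : 0 < 1 - α / 2 := by linarith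
  have h21 : 1 - α / 2 < 1 := by linarith
  set a := PhiInv (1 - ψ * α) with ha_def
  set b := PhiInv (1 - α / 2) with hb_def
  have hPa : Phi a = 1 - ψ * α := Phi_PhiInv h10 h11
  have hPb : Phi b = 1 - α / 2 := Phi_PhiInv h20 h21
  have hPna : Phi (-a) = ψ * α := by rw [Phi_neg, hPa]; ring
  rw [hPna]
  have hp0 : 0 < 1 - α + ψ * α := by nlinarith
  have hp1 : 1 - α + ψ * α < 1 := by nlinarith
  -- a ≥ 0.66
  have hsqrt : (2.4:ℝ) ≤ Real.sqrt (2 * π) := by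
    have h2pi : (5.76:ℝ) ≤ 2 * π := by nlinarith [Real.pi_gt_d6]
    nlinarith [Real.sq_sqrt (by positivity : (0:ℝ) ≤ 2 * π),
      Real.sqrt_nonneg (2 * π)]
  have ha66 : (0.66:ℝ) ≤ a := by
    rw [ha_def, le_PhiInv_iff h10 h11]
    have h1 : Phi 0.66 ≤ 1/2 + 0.66 * (Real.sqrt (2 * π))⁻¹ := Phi_le_linear (by norm_num)
    have h2 : (0.66:ℝ) * (Real.sqrt (2 * π))⁻¹ ≤ 0.275 := by
      rw [mul_inv_le_iff₀ (by positivity)]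
      nlinarith
    linarith
  have hab : a ≤ b := by
    rw [hb_def, le_PhiInv_iff h20 h21, hPa]; nlinarith
  -- main bound
  rw [PhiInv_lt_iff hp0 hp1]
  have hQb : ∫ t in Ioi b, g t = α/2 := by
    have h := one_sub_Phi b
    rw [hPb] at h; linarith
  have htail : 1 - Phi (b + 2*a) ≤ Real.exp (-(2*a)^2/2 - (2*a)*b) * (α/2) := by
    rw [one_sub_Phi]
    have h := tail_shift (b := b) (s := 2*a) (by linarith)
    rwa [hQb] at h
  have hexp : Real.exp (-(2*a)^2/2 - (2*a)*b) ≤ Real.exp (-1.7424) := by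
    apply Real.exp_le_exp.mpr
    nlinarith
  have hfin : 1 - Phi (b + 2*a) < 0.1 * α := by
    have h1 : Real.exp (-(2*a)^2/2 - (2*a)*b) * (α/2) < 0.2 * (α/2) := by
      apply mul_lt_mul_of_pos_right _ (by linarith)
      exact lt_of_le_of_lt hexp exp_bound
    linarith
  have : 2 * a + b = b + 2 * a := by ring
  rw [this]
  nlinarith [hfin]

end Aux
end

section
/- Let Y_1, ..., Y_m be real random variables (with arbitrary joint distribution) such that each Y_i has density f(y − θ_i), let C(·;·) be a marginal confidence interval procedure for the density f, let q ∈ (0,1), and let S = S(Y) ⊆ {1,...,m} be any measurable selection rule. If for each i ∈ S the interval CI_i = C(Y_i; q/m) is constructed, then FCR ≤ q. -/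
/-!
STATEMENT 17: For Y_1,...,Y_m with arbitrary joint distribution but marginal densities
f(· − θ_i), any selection rule S, and Bonferroni-adjusted marginal intervals
CI_i = C(Y_i; q/m) constructed for i ∈ S, the FCR is at most q.
-/

open MeasureTheory Set

open Classical in
theorem bonferroni_adjusted_fcr_control
    {Ω : Type*} [MeasurableSpace Ω] (P : Measure Ω) [IsProbabilityMeasure P]
    (m : ℕ) (hm : 1 ≤ m) (q : ℝ) (hq : 0 < q) (hq1 : q < 1)
    -- f is a Borel probability density on ℝ
    (f : ℝ → ℝ) (hf_meas : Measurable f) (hf_nonneg : ∀ x, 0 ≤ f x)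
    (hf_prob : IsProbabilityMeasure (volume.withDensity fun x => ENNReal.ofReal (f x)))
    -- Y_1, ..., Y_m with arbitrary joint distribution, Y_i with density f(· − θ_i)
    (θ : Fin m → ℝ) (Y : Fin m → Ω → ℝ) (hY_meas : ∀ i, Measurable (Y i))
    (hY_law : ∀ i, P.map (Y i) =
      volume.withDensity fun x => ENNReal.ofReal (f (x - θ i)))
    -- C is a measurable marginal confidence interval procedure for the density f
    (C : ℝ → ℝ → Set ℝ)
    (hC_meas : ∀ α t : ℝ, MeasurableSet {x : ℝ | t ∈ C x α})
    (hC_cov : ∀ α ∈ Set.Icc (0:ℝ) 1, ∀ t : ℝ,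
      ENNReal.ofReal (1 - α) ≤
        (volume.withDensity fun x => ENNReal.ofReal (f (x - t))) {x : ℝ | t ∈ C x α})
    -- any measurable selection rule
    (S : Ω → Finset (Fin m)) (hS_meas : ∀ i, MeasurableSet {ω | i ∈ S ω}) :
    -- FCR of the Bonferroni-adjusted intervals CI_i = C(Y_i; q/m) is at most q
    ∫ ω, (((S ω).filter fun i => θ i ∉ C (Y i ω) (q / m)).card : ℝ) /
        max ((S ω).card : ℝ) 1 ∂P ≤ q := by
  have hm0 : (0:ℝ) < m := by exact_mod_cast hm
  have hqm0 : 0 ≤ q / m := le_of_lt (div_pos hq hm0)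
  have hm1 : (1:ℝ) ≤ m := by exact_mod_cast hm
  have hqm1 : q / m ≤ 1 := (div_le_one hm0).2 (by linarith)
  -- miss sets
  set A : Fin m → Set Ω := fun i => {ω | θ i ∉ C (Y i ω) (q / m)} with hA
  have hA_eq : ∀ i, A i = Y i ⁻¹' {x : ℝ | θ i ∈ C x (q / m)}ᶜ := fun i => rfl
  have hA_meas : ∀ i, MeasurableSet (A i) := fun i =>
    (hY_meas i) (hC_meas (q / m) (θ i)).compl
  -- probability bound for each miss
  have hPA : ∀ i, (P (A i)).toReal ≤ q / m := by
    intro i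
    have hmap : IsProbabilityMeasure (P.map (Y i)) :=
      Measure.isProbabilityMeasure_map (hY_meas i).aemeasurable
    have hPmap : P (A i) = P.map (Y i) {x : ℝ | θ i ∈ C x (q / m)}ᶜ := by
      rw [Measure.map_apply (hY_meas i) (hC_meas (q / m) (θ i)).compl, hA_eq]
    have hcov := hC_cov (q / m) ⟨hqm0, hqm1⟩ (θ i)
    rw [← hY_law i] at hcov
    have hcompl : P.map (Y i) {x : ℝ | θ i ∈ C x (q / m)}ᶜ =
        1 - P.map (Y i) {x : ℝ | θ i ∈ C x (q / m)} :=
      prob_compl_eq_one_sub (hC_meas (q / m) (θ i))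
    have hle : P (A i) ≤ ENNReal.ofReal (q / m) := by
      rw [hPmap, hcompl]
      have h1 : (1 : ENNReal) - P.map (Y i) {x : ℝ | θ i ∈ C x (q / m)} ≤
          1 - ENNReal.ofReal (1 - q / m) := tsub_le_tsub_left hcov 1
      have h2 : (1 : ENNReal) - ENNReal.ofReal (1 - q / m) = ENNReal.ofReal (q / m) := by
        rw [← ENNReal.ofReal_one, ← ENNReal.ofReal_sub _ (by linarith)]
        norm_num
      rw [h2] at h1
      exact h1
    calc (P (A i)).toReal ≤ (ENNReal.ofReal (q / m)).toReal :=
          ENNReal.toReal_mono ENNReal.ofReal_ne_top hle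
      _ = q / m := ENNReal.toReal_ofReal hqm0
  -- dominating function
  set g : Ω → ℝ := fun ω => ∑ i : Fin m, (A i).indicator (fun _ => (1:ℝ)) ω with hg
  have hg_int : Integrable g P := by
    apply integrable_finset_sum
    intro i _
    exact (integrable_indicator_iff (hA_meas i)).2
      (integrableOn_const (measure_ne_top P (A i)))
  have hpt : ∀ ω, (((S ω).filter fun i => θ i ∉ C (Y i ω) (q / m)).card : ℝ) /
      max ((S ω).card : ℝ) 1 ≤ g ω := by
    intro ω
    have h1 : (((S ω).filter fun i => θ i ∉ C (Y i ω) (q / m)).card : ℝ) /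
        max ((S ω).card : ℝ) 1 ≤
        (((S ω).filter fun i => θ i ∉ C (Y i ω) (q / m)).card : ℝ) :=
      div_le_self (by positivity) (le_max_right _ _)
    refine h1.trans ?_
    have h2 : ((S ω).filter fun i => θ i ∉ C (Y i ω) (q / m)) ⊆
        (Finset.univ.filter fun i => θ i ∉ C (Y i ω) (q / m)) := by
      intro i hi
      simp only [Finset.mem_filter] at hi ⊢
      exact ⟨Finset.mem_univ i, hi.2⟩
    have h3 := Finset.card_le_card h2
    have h4 : ((Finset.univ.filter fun i => θ i ∉ C (Y i ω) (q / m)).card : ℝ) = g ω := by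
      rw [hg, Finset.card_filter]
      push_cast
      apply Finset.sum_congr rfl
      intro i _
      by_cases h : θ i ∉ C (Y i ω) (q / m)
      · simp [h, Set.indicator_apply, hA, Set.mem_setOf_eq]
      · simp [h, Set.indicator_apply, hA, Set.mem_setOf_eq]
    calc (((S ω).filter fun i => θ i ∉ C (Y i ω) (q / m)).card : ℝ)
        ≤ ((Finset.univ.filter fun i => θ i ∉ C (Y i ω) (q / m)).card : ℝ) := by
          exact_mod_cast h3
      _ = g ω := h4
  have hint : ∫ ω, (((S ω).filter fun i => θ i ∉ C (Y i ω) (q / m)).card : ℝ) /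
      max ((S ω).card : ℝ) 1 ∂P ≤ ∫ ω, g ω ∂P := by
    apply integral_mono_of_nonneg
    · exact Filter.Eventually.of_forall fun ω => by positivity
    · exact hg_int
    · exact Filter.Eventually.of_forall hpt
  refine hint.trans ?_
  have hgeval : ∫ ω, g ω ∂P = ∑ i : Fin m, (P (A i)).toReal := by
    rw [hg, integral_finset_sum]
    · apply Finset.sum_congr rfl
      intro i _
      rw [integral_indicator_const _ (hA_meas i)]
      simp
      rfl
    · intro i _
      exact (integrable_indicator_iff (hA_meas i)).2
        (integrableOn_const (measure_ne_top P (A i)))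
  rw [hgeval]
  calc ∑ i : Fin m, (P (A i)).toReal ≤ ∑ _i : Fin m, q / m :=
        Finset.sum_le_sum fun i _ => hPA i
    _ = m * (q / m) := by simp [Finset.sum_const, mul_comm]
    _ = q := by field_simp
end
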